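/- arXiv:2509.09941 — 8 statements merged into one kernel-verified Lean document; each statement's English description precedes it below -/
import Mathlib

section
/- Let $A$ be a commutative ring, $M$ an $A$-module, and $x, y \in A$. If $x$ is a non-zero divisor on $M$, then $y$ is a non-zero divisor on $M/xM$ if and only if $y$ is a non-zero divisor on $M/x^nM$ for every $n \geq 1$. -/
/-!
STATEMENT 1: Let `A` be a commutative ring, `M` an `A`-module and `x, y ∈ A`.  If `x` is a
non-zero divisor on `M`, then `y` is a non-zero divisor on `M/xM` iff `y` is a non-zero
divisor on `M/xⁿM` for every `n ≥ 1`.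
-/

open Pointwise

private lemma mem_ptw_smul {A : Type*} [CommRing A] {M : Type*} [AddCommGroup M] [Module A M]
    {a : A} {S : Submodule A M} {m : M} : m ∈ a • S ↔ ∃ s ∈ S, a • s = m := by
  rw [← SetLike.mem_coe, Submodule.coe_pointwise_smul]
  exact Set.mem_smul_set

theorem stmt1 (A : Type*) [CommRing A] (M : Type*) [AddCommGroup M] [Module A M]
    (x y : A) (hx : IsSMulRegular M x) :
    IsSMulRegular (M ⧸ (x • (⊤ : Submodule A M))) y ↔
      ∀ n : ℕ, 1 ≤ n → IsSMulRegular (M ⧸ (x ^ n • (⊤ : Submodule A M))) y := by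
  constructor
  · intro h n hn
    rw [isSMulRegular_quotient_iff_mem_of_smul_mem] at h ⊢
    simp only [mem_ptw_smul, Submodule.mem_top, true_and] at h ⊢
    clear hn
    induction n with
    | zero => exact fun m _ => ⟨m, by simp⟩
    | succ n ih =>
      intro m hm
      -- y • m ∈ x^(n+1) M ⊆ x^n M, so m ∈ x^n M by ih
      obtain ⟨m', hm'⟩ := hm
      obtain ⟨k, hk⟩ := ih m ⟨x • m', by
        rw [← hm', pow_succ, smul_smul]⟩
      -- m = x^n • k, and y • (x^n • k) = x^(n+1) • m'
      -- hence x^n • (y • k) = x^n • (x • m'), so y • k = x • m'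
      have hreg : IsSMulRegular M (x ^ n) := hx.pow n
      have : y • k = x • m' := by
        apply hreg
        show x ^ n • y • k = x ^ n • x • m'
        rw [smul_comm, hk, ← hm', pow_succ, smul_smul]
      obtain ⟨k', hk'⟩ := h k ⟨m', this.symm⟩
      exact ⟨k', by rw [← hk, ← hk', pow_succ, smul_smul]⟩
  · intro h
    have := h 1 le_rfl; rwa [pow_one] at this
end

section
/- Let $\mathcal{T}$ be a triangulated category with an action of a graded-commutative ring $R$, and let $x, y \in R$ be productive elements (i.e. $x$ acts as zero on $M /\!\!/ x$ for every object $M$, and similarly for $y$). Then the product $xy$ is productive: $xy$ acts as zero on $M /\!\!/ (xy)$ for every object $M$. -/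
open CategoryTheory Category Limits Pretriangulated

universe v u

variable (T : Type u) [Category.{v} T] [Preadditive T] [HasZeroObject T]
  [HasShift T ℤ] [∀ n : ℤ, (CategoryTheory.shiftFunctor T n).Additive] [Pretriangulated T]

/-- A homogeneous element of degree `d` of a graded-commutative ring acting on the
triangulated category `T`, i.e. an element of the graded center: a family of morphisms
`x(M) : M ⟶ Σ^d M`, natural in `M` and commuting with the suspension up to the sign
`(-1)^d`. -/
structure CentralElement (d : ℤ) where
  app : ∀ M : T, M ⟶ M⟦d⟧
  natural : ∀ {M N : T} (f : M ⟶ N), app M ≫ f⟦d⟧' = f ≫ app N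
  shift_comm : ∀ M : T, app (M⟦(1:ℤ)⟧) =
    (((-1 : ℤˣ) ^ d : ℤˣ) : ℤ) • ((app M)⟦(1:ℤ)⟧' ≫ (shiftComm M d 1).hom)

/-- A morphism `f` is `C`-ghost if it induces zero on `Hom^*_T(C,-)`. -/
def IsGhost (C : T) {A B : T} (f : A ⟶ B) : Prop :=
  ∀ (n : ℤ) (g : C⟦n⟧ ⟶ A), g ≫ f = 0

/-- A morphism `f` is `M`-coghost if it induces zero on `Hom^*_T(-,M)`. -/
def IsCoghost (M : T) {A B : T} (f : A ⟶ B) : Prop :=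
  ∀ (n : ℤ) (g : B ⟶ M⟦n⟧), f ≫ g = 0

/-- `x` acts as a non-zero divisor on the graded module `Hom^*_T(C,M)`. -/
def IsRegularOn {d : ℤ} (x : CentralElement T d) (C M : T) : Prop :=
  ∀ (n : ℤ) (f : C⟦n⟧ ⟶ M), f ≫ x.app M = 0 → f = 0

/-- `x` is productive: `x` acts as zero on every Koszul object `M ⫽ x` (i.e. on every
cone of `x(M)`), for every object `M`. -/
def Productive {d : ℤ} (x : CentralElement T d) : Prop :=
  ∀ (M K : T) (g : M⟦d⟧ ⟶ K) (h : K ⟶ M⟦(1:ℤ)⟧),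
    (Triangle.mk (x.app M) g h ∈ distTriang T) → x.app K = 0

/-!
STATEMENT 5: If `x, y ∈ R` are productive elements acting on the triangulated category
`T`, then their product `xy` (a central element `z` of degree `|x| + |y|` whose action
is the composite of the actions of `y` and `x`) is productive.
-/

theorem stmt5 {dx dy : ℤ} (x : CentralElement T dx) (y : CentralElement T dy)
    (z : CentralElement T (dx + dy))
    (hz : ∀ M : T, z.app M = y.app M ≫ x.app (M⟦dy⟧) ≫
      (shiftFunctorAdd' T dy dx (dx + dy) (add_comm dy dx)).inv.app M)
    (hx : Productive T x) (hy : Productive T y) :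
    Productive T z := by
  intro M K gK hK hT
  -- Koszul triangle for `y` on `M`, with cone `L`.
  obtain ⟨L, g₁, h₁, hT1⟩ := distinguished_cocone_triangle (y.app M)
  -- Koszul triangle for `x` on `M⟦dy⟧` (transported along the shift iso), with cone `Q`.
  obtain ⟨Q, g₂, h₂, hT2⟩ := distinguished_cocone_triangle
    (x.app (M⟦dy⟧) ≫ (shiftFunctorAdd' T dy dx (dx + dy) (add_comm dy dx)).inv.app M)
  have hyL : y.app L = 0 := hy M L g₁ h₁ hT1
  have hxQ : x.app Q = 0 := by
    refine hx (M⟦dy⟧) Q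
      ((shiftFunctorAdd' T dy dx (dx + dy) (add_comm dy dx)).inv.app M ≫ g₂) h₂
      (isomorphic_distinguished _ hT2 _ ?_)
    exact Triangle.isoMk _ _ (Iso.refl _)
      (((shiftFunctorAdd' T dy dx (dx + dy) (add_comm dy dx)).app M).symm) (Iso.refl _)
      (by exact (id_comp _).symm) (by exact comp_id _)
      (by change h₂ ≫ (shiftFunctor T (1:ℤ)).map (𝟙 (M⟦dy⟧)) = 𝟙 _ ≫ h₂; simp)
  -- `y.app M ≫ x.app (M⟦dy⟧)` in terms of `z.app M`
  have auxkey : y.app M ≫ x.app (M⟦dy⟧) =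
      z.app M ≫ (shiftFunctorAdd' T dy dx (dx + dy) (add_comm dy dx)).hom.app M := by
    rw [hz M]
    simp only [assoc, Iso.inv_hom_id_app, Functor.comp_obj]
    rw [comp_id]
  -- completion `m₁ : L ⟶ K`
  obtain ⟨m₁, hm₁a, hm₁b⟩ := complete_distinguished_triangle_morphism
    (Triangle.mk (y.app M) g₁ h₁) (Triangle.mk (z.app M) gK hK) hT1 hT
    (𝟙 M) (x.app (M⟦dy⟧) ≫ (shiftFunctorAdd' T dy dx (dx + dy) (add_comm dy dx)).inv.app M)
    (by change y.app M ≫ _ = 𝟙 M ≫ z.app M; rw [id_comp, hz M]; rfl)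
  change L ⟶ K at m₁
  change g₁ ≫ m₁ = (x.app (M⟦dy⟧) ≫
    (shiftFunctorAdd' T dy dx (dx + dy) (add_comm dy dx)).inv.app M) ≫ gK at hm₁a
  change h₁ ≫ (shiftFunctor T (1:ℤ)).map (𝟙 M) = m₁ ≫ hK at hm₁b
  have hm₁h : m₁ ≫ hK = h₁ := by rw [← hm₁b]; simp
  -- completion `m₃ : K ⟶ Q`
  obtain ⟨m₃, hm₃a, _⟩ := complete_distinguished_triangle_morphism
    (Triangle.mk (z.app M) gK hK)
    (Triangle.mk (x.app (M⟦dy⟧) ≫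
      (shiftFunctorAdd' T dy dx (dx + dy) (add_comm dy dx)).inv.app M) g₂ h₂) hT hT2
    (y.app M) (𝟙 _) (by change z.app M ≫ 𝟙 (M⟦dx + dy⟧) = y.app M ≫ (x.app (M⟦dy⟧) ≫ _); rw [comp_id, hz M])
  change K ⟶ Q at m₃
  change gK ≫ m₃ = 𝟙 (M⟦dx + dy⟧) ≫ g₂ at hm₃a
  rw [id_comp] at hm₃a
  -- correct `m₃` so that `m₁ ≫ m₃' = 0`
  have hcmp : g₁ ≫ (m₁ ≫ m₃) = 0 := by
    rw [← assoc, hm₁a, assoc, hm₃a]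
    exact comp_distTriang_mor_zero₁₂ _ hT2
  obtain ⟨w, hw⟩ := Triangle.yoneda_exact₃ _ hT1 (m₁ ≫ m₃) hcmp
  change M⟦(1:ℤ)⟧ ⟶ Q at w
  change m₁ ≫ m₃ = h₁ ≫ w at hw
  have hgm₃' : gK ≫ (m₃ - hK ≫ w) = g₂ := by
    have h0 : gK ≫ hK = 0 := comp_distTriang_mor_zero₂₃ _ hT
    rw [Preadditive.comp_sub, hm₃a, ← assoc, h0, zero_comp, sub_zero]
  have hm₁m₃' : m₁ ≫ (m₃ - hK ≫ w) = 0 := by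
    rw [Preadditive.comp_sub, hw, ← assoc, hm₁h, sub_self]
  -- the factorization `y.app N ≫ gK⟦dy⟧' = g₂ ≫ ξ`
  have hobs : (x.app (M⟦dy⟧) ≫
      (shiftFunctorAdd' T dy dx (dx + dy) (add_comm dy dx)).inv.app M) ≫
      (y.app (M⟦dx + dy⟧) ≫ gK⟦dy⟧') = 0 := by
    rw [← assoc, ← y.natural, assoc, ← Functor.map_comp, ← hm₁a, Functor.map_comp, ← assoc,
      y.natural g₁, hyL, comp_zero, zero_comp]
  obtain ⟨ξ, hξ⟩ := Triangle.yoneda_exact₂ _ hT2 (y.app (M⟦dx + dy⟧) ≫ gK⟦dy⟧') hobs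
  change Q ⟶ K⟦dy⟧ at ξ
  change y.app (M⟦dx + dy⟧) ≫ gK⟦dy⟧' = g₂ ≫ ξ at hξ
  -- `y.app K - m₃' ≫ ξ` factors through `hK`
  have hgφ : gK ≫ (y.app K - (m₃ - hK ≫ w) ≫ ξ) = 0 := by
    rw [Preadditive.comp_sub, ← assoc, hgm₃', ← y.natural gK, ← hξ, sub_self]
  obtain ⟨t₀, ht₀⟩ := Triangle.yoneda_exact₃ _ hT _ hgφ
  change M⟦(1:ℤ)⟧ ⟶ K⟦dy⟧ at t₀
  change y.app K - (m₃ - hK ≫ w) ≫ ξ = hK ≫ t₀ at ht₀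
  have hyK : y.app K = (m₃ - hK ≫ w) ≫ ξ + hK ≫ t₀ := eq_add_of_sub_eq' ht₀
  -- `h₁ ≫ t₀ = 0`
  have hm₁y : m₁ ≫ y.app K = 0 := by rw [← y.natural m₁, hyL, zero_comp]
  have hh₁t₀ : h₁ ≫ t₀ = 0 := by
    have e1 : m₁ ≫ (y.app K - (m₃ - hK ≫ w) ≫ ξ) = 0 := by
      rw [Preadditive.comp_sub, hm₁y, ← assoc, hm₁m₃', zero_comp, sub_zero]
    rw [← hm₁h, assoc, ← ht₀, e1]
  -- factor `hK ≫ x.app (M⟦1⟧)` through `h₁⟦dx⟧'` using the shifted rotated triangle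
  have hTsh : (Triangle.shiftFunctor T dx).obj ((Triangle.mk (y.app M) g₁ h₁).rotate)
      ∈ distTriang T :=
    Triangle.shift_distinguished _ (rot_of_distTriang _ hT1) dx
  have hzero1 : hK ≫ (y.app M)⟦(1:ℤ)⟧' ≫ (x.app (M⟦dy⟧))⟦(1:ℤ)⟧' = 0 := by
    rw [← Functor.map_comp, auxkey, Functor.map_comp, ← assoc]
    have h0 : hK ≫ (z.app M)⟦(1:ℤ)⟧' = 0 := comp_distTriang_mor_zero₃₁ _ hT
    rw [h0, zero_comp]
  have hcore : hK ≫ x.app (M⟦(1:ℤ)⟧) ≫ ((y.app M)⟦(1:ℤ)⟧')⟦dx⟧' = 0 := by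
    rw [x.natural ((y.app M)⟦(1:ℤ)⟧'), x.shift_comm (M⟦dy⟧)]
    rw [Preadditive.comp_zsmul, Preadditive.comp_zsmul]
    rw [reassoc_of% hzero1, zero_comp, smul_zero]
  have hδobs : (hK ≫ x.app (M⟦(1:ℤ)⟧)) ≫
      ((Triangle.shiftFunctor T dx).obj ((Triangle.mk (y.app M) g₁ h₁).rotate)).mor₃ = 0 := by
    change (hK ≫ x.app (M⟦(1:ℤ)⟧)) ≫ (dx.negOnePow • (-(y.app M)⟦(1:ℤ)⟧')⟦dx⟧' ≫
      (shiftFunctorComm T 1 dx).hom.app (M⟦dy⟧)) = 0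
    rw [Functor.map_neg, Linear.comp_units_smul, Preadditive.neg_comp, Preadditive.comp_neg]
    rw [assoc, ← assoc (x.app (M⟦(1:ℤ)⟧)), ← assoc, ← assoc]
    rw [assoc hK, hcore]
    simp
  obtain ⟨ζ, hζ⟩ := Triangle.coyoneda_exact₃ _ hTsh (hK ≫ x.app (M⟦(1:ℤ)⟧)) hδobs
  change K ⟶ L⟦dx⟧ at ζ
  change hK ≫ x.app (M⟦(1:ℤ)⟧) = ζ ≫ (dx.negOnePow • h₁⟦dx⟧') at hζ
  -- final computation
  rw [hz K, hyK, Preadditive.add_comp]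
  have term1 : ((m₃ - hK ≫ w) ≫ ξ) ≫ x.app (K⟦dy⟧) ≫
      (shiftFunctorAdd' T dy dx (dx + dy) (add_comm dy dx)).inv.app K = 0 := by
    rw [assoc, ← assoc ξ, ← x.natural ξ, hxQ, zero_comp, zero_comp, comp_zero]
  have term2 : (hK ≫ t₀) ≫ x.app (K⟦dy⟧) ≫
      (shiftFunctorAdd' T dy dx (dx + dy) (add_comm dy dx)).inv.app K = 0 := by
    rw [assoc, ← assoc t₀, ← x.natural t₀, ← assoc, ← assoc, hζ]
    simp only [Linear.comp_units_smul, Linear.units_smul_comp, assoc]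
    rw [← Functor.map_comp_assoc, hh₁t₀]
    simp
  rw [term1, term2, add_zero]
end

section
/- Let $\mathcal{T}$ be an $R$-linear triangulated category and $M \in \mathcal{T}$. For a homogeneous $x \in R$, the following are equivalent: (1) the morphism $\Sigma^{-1}(M /\!\!/ x) \to M$ is zero; (2) the object $M /\!\!/ x$ is zero; (3) $M /\!\!/ x^n = 0$ for some $n \geq 1$; (4) $M /\!\!/ x^n = 0$ for all $n \geq 1$. -/
open CategoryTheory Category Limits Pretriangulated

universe v u

variable (T : Type u) [Category.{v} T] [Preadditive T] [HasZeroObject T]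
  [HasShift T ℤ] [∀ n : ℤ, (CategoryTheory.shiftFunctor T n).Additive] [Pretriangulated T]

variable {T}

private lemma coh_aux (e m : ℤ) (N : T) (u : N ⟶ N⟦e⟧) :
    u⟦m+1⟧' ≫ (shiftFunctorComm T e (m+1)).hom.app N ≫
      ((shiftFunctorAdd T m 1).hom.app N)⟦e⟧' =
    (shiftFunctorAdd T m 1).hom.app N ≫ (u⟦m⟧')⟦1⟧' ≫
      ((shiftFunctorComm T e m).hom.app N)⟦1⟧' ≫
      (shiftFunctorComm T e 1).hom.app (N⟦m⟧) := by
  rw [shiftFunctorComm_hom_app_comp_shift_shiftFunctorAdd_hom_app]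
  have := (shiftFunctorAdd T m 1).hom.naturality u
  dsimp at this
  rw [reassoc_of% this]

private lemma aux_unit_smul_eq_zero {u : ℤˣ} {A B : T} {f : A ⟶ B} (hf : (u : ℤ) • f = 0) :
    f = 0 := by
  have h2 := congrArg (fun z => (u : ℤ) • z) hf
  simpa [smul_smul, ← Units.val_mul, Int.units_mul_self] using h2

namespace CentralElement

variable {e : ℤ} (y : CentralElement T e)

private lemma step_up (m : ℤ) (N : T)
    (ih : y.app (N⟦m⟧) = ((((-1 : ℤˣ) ^ e) ^ m : ℤˣ) : ℤ) •
      ((y.app N)⟦m⟧' ≫ (shiftFunctorComm T e m).hom.app N)) :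
    y.app (N⟦m+1⟧) = ((((-1 : ℤˣ) ^ e) ^ (m+1) : ℤˣ) : ℤ) •
      ((y.app N)⟦m+1⟧' ≫ (shiftFunctorComm T e (m+1)).hom.app N) := by
  rw [← cancel_mono (((shiftFunctorAdd T m 1).hom.app N)⟦e⟧')]
  have hnat := y.natural ((shiftFunctorAdd T m 1).hom.app N)
  simp only [Functor.comp_obj] at hnat
  rw [hnat, y.shift_comm (N⟦m⟧), ih]
  simp only [Preadditive.zsmul_comp, Preadditive.comp_zsmul, assoc, Functor.map_zsmul,
    Functor.map_comp, Iso.app_hom, smul_smul, coh_aux]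
  rw [zpow_add_one]
  push_cast [Units.val_mul]
  ring_nf

private lemma step_down (m : ℤ) (N : T)
    (ih : y.app (N⟦m+1⟧) = ((((-1 : ℤˣ) ^ e) ^ (m+1) : ℤˣ) : ℤ) •
      ((y.app N)⟦m+1⟧' ≫ (shiftFunctorComm T e (m+1)).hom.app N)) :
    y.app (N⟦m⟧) = ((((-1 : ℤˣ) ^ e) ^ m : ℤˣ) : ℤ) •
      ((y.app N)⟦m⟧' ≫ (shiftFunctorComm T e m).hom.app N) := by
  have hnat := y.natural ((shiftFunctorAdd T m 1).hom.app N)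
  simp only [Functor.comp_obj] at hnat
  rw [ih, y.shift_comm (N⟦m⟧)] at hnat
  simp only [Preadditive.zsmul_comp, Preadditive.comp_zsmul, assoc, Functor.map_zsmul,
    Functor.map_comp, Iso.app_hom, smul_smul, coh_aux] at hnat
  have hs : ((-1:ℤˣ)^e) * ((-1:ℤˣ)^e)^(m+1) = ((-1:ℤˣ)^e)^m := by
    rw [zpow_add_one, mul_comm, mul_assoc, Int.units_mul_self, mul_one]
  apply (shiftFunctor T (1:ℤ)).map_injective
  rw [← cancel_mono ((shiftFunctorComm T e 1).hom.app (N⟦m⟧)),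
    ← cancel_epi ((shiftFunctorAdd T m 1).hom.app N)]
  have h2 := congrArg (fun z => ((((-1:ℤˣ)^e : ℤˣ)) : ℤ) • z) hnat
  simp only [smul_smul, ← Units.val_mul, Int.units_mul_self, hs, Units.val_one, one_smul] at h2
  simp only [Functor.map_zsmul, Functor.map_comp, Preadditive.comp_zsmul,
    Preadditive.zsmul_comp, assoc]
  rw [← h2]

lemma app_shift (n : ℤ) (N : T) :
    y.app (N⟦n⟧) = ((((-1 : ℤˣ) ^ e) ^ n : ℤˣ) : ℤ) •
      ((y.app N)⟦n⟧' ≫ (shiftFunctorComm T e n).hom.app N) := by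
  induction n using Int.induction_on with
  | zero =>
    have h1 := y.natural ((shiftFunctorZero T ℤ).hom.app N)
    have h2 := (shiftFunctorZero T ℤ).hom.naturality (y.app N)
    dsimp at h2
    rw [zpow_zero, Units.val_one, one_smul, shiftFunctorComm_zero_hom_app,
      ← cancel_mono (((shiftFunctorZero T ℤ).hom.app N)⟦e⟧'), h1]
    simp only [assoc, ← Functor.map_comp, Iso.inv_hom_id_app, Functor.map_id, comp_id,
      Functor.id_obj, Functor.comp_obj]
    rw [(shiftFunctor T e).map_id, comp_id]
    exact h2.symm
  | succ n ih => exact y.step_up n N ih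
  | pred n ih =>
    refine y.step_down (-(n:ℤ) - 1) N ?_
    rw [show (-(n:ℤ) - 1) + 1 = -(n:ℤ) by ring]
    exact ih

lemma app_shift_self (N : T) :
    y.app (N⟦e⟧) = ((((-1 : ℤˣ) ^ e) ^ e : ℤˣ) : ℤ) • (y.app N)⟦e⟧' := by
  rw [y.app_shift e N, shiftFunctorComm_eq_refl]
  simp

lemma isZero_cone_of_con_zero {M K : T} (g : M⟦e⟧ ⟶ K) (h : K ⟶ M⟦(1:ℤ)⟧)
    (hT : Triangle.mk (y.app M) g h ∈ distTriang T) (hh : h = 0) :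
    IsZero K := by
  have hu := y.app_shift_self M
  rw [IsZero.iff_id_eq_zero]
  obtain ⟨t, ht'⟩ : ∃ t : K ⟶ M⟦e⟧, 𝟙 K = t ≫ g :=
    Triangle.coyoneda_exact₃ _ hT (𝟙 K) (by subst hh; exact comp_zero)
  have ht : 𝟙 K = t ≫ g := ht'
  have h12 : y.app M ≫ g = 0 := comp_distTriang_mor_zero₁₂ _ hT
  have hg : g ≫ y.app K = 0 := by
    rw [← y.natural g, hu, Preadditive.zsmul_comp, ← Functor.map_comp, h12,
      Functor.map_zero, smul_zero]
  have hyK : y.app K = 0 := by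
    rw [← id_comp (y.app K), ht, assoc, hg, comp_zero]
  have ht2 : t ≫ (y.app M)⟦e⟧' = 0 := by
    have hn : y.app K ≫ t⟦e⟧' = t ≫ y.app (M⟦e⟧) := y.natural t
    rw [hyK, zero_comp, hu, Preadditive.comp_zsmul] at hn
    exact aux_unit_smul_eq_zero hn.symm
  have hm : Mono (y.app M) := Triangle.mono₁ _ hT hh
  have ht0 : t = 0 := by
    have h3 := congrArg (shiftFunctor T (-e)).map ht2
    simp only [Functor.map_comp, Functor.map_zero] at h3
    rw [shift_shift_neg'] at h3
    rw [← assoc, ← assoc, Preadditive.IsIso.comp_right_eq_zero, assoc] at h3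
    have h5 : t⟦-e⟧' ≫ (shiftFunctorCompIsoId T e (-e) (add_neg_cancel e)).hom.app M = 0 := by
      rw [← cancel_mono (y.app M), assoc, h3, zero_comp]
    rw [Preadditive.IsIso.comp_right_eq_zero] at h5
    rwa [(shiftFunctor T (-e)).map_eq_zero_iff] at h5
  rw [ht, ht0, zero_comp]

end CentralElement

variable (T)

/-!
STATEMENT 9: For an object `M` and a homogeneous central element `x` with chosen powers
`xⁿ` (of degree `n·|x|`) and chosen Koszul objects `K n = M ⫽ xⁿ`, the following are
equivalent: (1) the morphism `Σ⁻¹(M ⫽ x) → M` (equivalently its suspension, the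
connecting map `h 1 : M ⫽ x ⟶ Σ M`) is zero; (2) `M ⫽ x = 0`; (3) `M ⫽ xⁿ = 0` for
some `n ≥ 1`; (4) `M ⫽ xⁿ = 0` for all `n ≥ 1`.
-/

theorem stmt9 {d : ℤ} (x : CentralElement T d)
    (xpow : ∀ n : ℕ, CentralElement T ((n : ℤ) * d))
    (hx1 : ∀ M : T, (xpow 1).app M = x.app M ≫ eqToHom (by rw [Nat.cast_one, one_mul]))
    (hpow : ∀ (n : ℕ) (M : T), (xpow (n + 1)).app M =
      x.app M ≫ (xpow n).app (M⟦d⟧) ≫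
        (shiftFunctorAdd' T d ((n : ℤ) * d) (((n + 1 : ℕ) : ℤ) * d)
          (by push_cast; ring)).inv.app M)
    (M : T) (K : ℕ → T)
    (g : ∀ n : ℕ, M⟦(n : ℤ) * d⟧ ⟶ K n) (h : ∀ n : ℕ, K n ⟶ M⟦(1:ℤ)⟧)
    (ht : ∀ n : ℕ, 1 ≤ n → Triangle.mk ((xpow n).app M) (g n) (h n) ∈ distTriang T) :
    List.TFAE [h 1 = 0, IsZero (K 1),
      ∃ n : ℕ, 1 ≤ n ∧ IsZero (K n), ∀ n : ℕ, 1 ≤ n → IsZero (K n)] := by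
  tfae_have 1 → 2 := by
    intro h1
    exact (xpow 1).isZero_cone_of_con_zero (g 1) (h 1) (ht 1 le_rfl) h1
  tfae_have 2 → 4 := by
    intro h2 n hn
    have hiso1 : IsIso ((xpow 1).app M) :=
      (Triangle.isZero₃_iff_isIso₁ _ (ht 1 le_rfl)).1 h2
    have hxM : IsIso (x.app M) := by
      have e2 : x.app M = (xpow 1).app M ≫
          eqToHom (show M⟦((1:ℕ):ℤ)*d⟧ = M⟦d⟧ by rw [Nat.cast_one, one_mul]) := by
        rw [hx1 M, assoc, eqToHom_trans, eqToHom_refl, comp_id]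
      rw [e2]; infer_instance
    have hshift : ∀ N : T, IsIso (x.app N) → IsIso (x.app (N⟦d⟧)) := by
      intro N hN
      have hn2 : x.app N ≫ (x.app N)⟦d⟧' = x.app N ≫ x.app (N⟦d⟧) := x.natural (x.app N)
      have heq : x.app (N⟦d⟧) = (x.app N)⟦d⟧' := by
        haveI := hN
        exact ((cancel_epi (x.app N)).1 hn2).symm
      rw [heq]; infer_instance
    have hpowiso : ∀ (m : ℕ) (N : T), IsIso (x.app N) → IsIso ((xpow (m+1)).app N) := by
      intro m
      induction m with
      | zero =>
        intro N hN
        rw [hx1 N]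
        haveI := hN
        infer_instance
      | succ k ihk =>
        intro N hN
        rw [hpow (k+1) N]
        haveI := hN
        haveI := ihk (N⟦d⟧) (hshift N hN)
        infer_instance
    obtain ⟨m, rfl⟩ : ∃ m, n = m + 1 := ⟨n - 1, by omega⟩
    exact Triangle.isZero₃_of_isIso₁ _ (ht (m+1) (Nat.le_add_left 1 m)) (hpowiso m M hxM)
  tfae_have 4 → 3 := by
    intro h4
    exact ⟨1, le_rfl, h4 1 le_rfl⟩
  tfae_have 3 → 1 := by
    rintro ⟨n, hn, hz⟩
    have hiso : IsIso ((xpow n).app M) := (Triangle.isZero₃_iff_isIso₁ _ (ht n hn)).1 hz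
    obtain ⟨m, rfl⟩ : ∃ m, n = m + 1 := ⟨n - 1, by omega⟩
    have hpe : x.app M ≫ (xpow m).app (M⟦d⟧) ≫
        (shiftFunctorAdd' T d ((m : ℤ) * d) (((m + 1 : ℕ) : ℤ) * d)
          (by push_cast; ring)).inv.app M ≫ inv ((xpow (m+1)).app M) = 𝟙 M := by
      have hcomp : (x.app M ≫ (xpow m).app (M⟦d⟧)) ≫
          (shiftFunctorAdd' T d ((m : ℤ) * d) (((m + 1 : ℕ) : ℤ) * d)
            (by push_cast; ring)).inv.app M = (xpow (m+1)).app M := by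
        rw [hpow m M, assoc]
      rw [← assoc, ← assoc, hcomp, IsIso.hom_inv_id]
    have hρ : (xpow 1).app M ≫
        (eqToHom (show M⟦((1:ℕ):ℤ)*d⟧ = M⟦d⟧ by rw [Nat.cast_one, one_mul]) ≫
          (xpow m).app (M⟦d⟧) ≫
          (shiftFunctorAdd' T d ((m : ℤ) * d) (((m + 1 : ℕ) : ℤ) * d)
            (by push_cast; ring)).inv.app M ≫ inv ((xpow (m+1)).app M)) = 𝟙 M := by
      rw [hx1 M]
      simp only [assoc, eqToHom_trans_assoc, eqToHom_refl, id_comp]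
      exact hpe
    have z31 : h 1 ≫ ((xpow 1).app M)⟦(1:ℤ)⟧' = 0 :=
      comp_distTriang_mor_zero₃₁ _ (ht 1 le_rfl)
    calc h 1 = h 1 ≫ ((xpow 1).app M ≫
        (eqToHom (show M⟦((1:ℕ):ℤ)*d⟧ = M⟦d⟧ by rw [Nat.cast_one, one_mul]) ≫
          (xpow m).app (M⟦d⟧) ≫
          (shiftFunctorAdd' T d ((m : ℤ) * d) (((m + 1 : ℕ) : ℤ) * d)
            (by push_cast; ring)).inv.app M ≫ inv ((xpow (m+1)).app M)))⟦(1:ℤ)⟧' := by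
          rw [hρ]; simp
    _ = (h 1 ≫ ((xpow 1).app M)⟦(1:ℤ)⟧') ≫ (eqToHom (show M⟦((1:ℕ):ℤ)*d⟧ = M⟦d⟧ by
            rw [Nat.cast_one, one_mul]) ≫
          (xpow m).app (M⟦d⟧) ≫
          (shiftFunctorAdd' T d ((m : ℤ) * d) (((m + 1 : ℕ) : ℤ) * d)
            (by push_cast; ring)).inv.app M ≫ inv ((xpow (m+1)).app M))⟦(1:ℤ)⟧' := by
          rw [Functor.map_comp, assoc]
    _ = 0 := by rw [z31, zero_comp]
  tfae_finish
end

section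
/- In the derived category of $\mathbb{Z}$-modules, the complex $M$ with $\mathbb{Z}/3$ in degree $1$ and $\mathbb{Z}/2$ in degree $0$ and zero differential satisfies: multiplication by $2$ is injective on $\mathrm{Hom}^*_{D(\mathbb{Z})}(\mathbb{Z}/3, M)$ (indeed this graded group computes to $\mathbb{Z}/3$-related terms annihilated appropriately), the Koszul object $M /\!\!/ 2$ (the cone of multiplication by $2$ on $M$) is nonzero, yet $\mathrm{Hom}^*_{D(\mathbb{Z})}(\mathbb{Z}/3, M /\!\!/ 2) = 0$. -/
/-!
STATEMENT 12: In the derived category `D(ℤ)` of abelian groups, the complex `M` with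
`ℤ/3` in (homological) degree `1`, `ℤ/2` in degree `0`, and zero differential
satisfies: multiplication by `2` is injective on `Hom^*_{D(ℤ)}(ℤ/3, M)`; yet any
Koszul object `M ⫽ 2` (cone of multiplication by `2` on `M`) is nonzero while
`Hom^*_{D(ℤ)}(ℤ/3, M ⫽ 2) = 0`.
-/

open CategoryTheory Limits Pretriangulated

noncomputable section

attribute [local instance] HasDerivedCategory.standard

/-- The complex with `ℤ/3` in cohomological degree `-1` (homological degree `1`),
`ℤ/2` in degree `0`, and zero differentials. -/
def Mcplx : CochainComplex (ModuleCat ℤ) ℤ where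
  X n := if n = -1 then ModuleCat.of ℤ (ZMod 3)
    else if n = 0 then ModuleCat.of ℤ (ZMod 2) else ModuleCat.of ℤ PUnit
  d _ _ := 0
  shape _ _ _ := rfl

/-- `M` as an object of the derived category `D(ℤ)`. -/
def Mobj : DerivedCategory (ModuleCat ℤ) := DerivedCategory.Q.obj Mcplx

/-- `C = ℤ/3`, viewed as a complex concentrated in degree `0`, in `D(ℤ)`. -/
def Cobj : DerivedCategory (ModuleCat ℤ) :=
  DerivedCategory.Q.obj
    ((HomologicalComplex.single (ModuleCat ℤ) (ComplexShape.up ℤ) 0).obj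
      (ModuleCat.of ℤ (ZMod 3)))

lemma zmod3_zsmul (x : ZMod 3) : (3 : ℤ) • x = 0 := by
  rw [← Int.cast_smul_eq_zsmul (ZMod 3)]
  have : ((3 : ℤ) : ZMod 3) = 0 := by decide
  rw [this, zero_smul]

lemma zmod2_zsmul (x : ZMod 2) : (2 : ℤ) • x = 0 := by
  rw [← Int.cast_smul_eq_zsmul (ZMod 2)]
  have : ((2 : ℤ) : ZMod 2) = 0 := by decide
  rw [this, zero_smul]

lemma three_smul_id_zmod3 : (3 : ℤ) • 𝟙 (ModuleCat.of ℤ (ZMod 3)) = 0 := by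
  ext x
  exact zmod3_zsmul x

lemma two_smul_id_zmod2 : (2 : ℤ) • 𝟙 (ModuleCat.of ℤ (ZMod 2)) = 0 := by
  ext x
  exact zmod2_zsmul x

lemma three_smul_id_Cobj : (3 : ℤ) • 𝟙 Cobj = 0 := by
  have h1 : (3 : ℤ) • 𝟙 ((HomologicalComplex.single (ModuleCat ℤ) (ComplexShape.up ℤ) 0).obj
      (ModuleCat.of ℤ (ZMod 3))) = 0 := by
    rw [← CategoryTheory.Functor.map_id, ← Functor.map_zsmul, three_smul_id_zmod3,
      CategoryTheory.Functor.map_zero]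
  show (3 : ℤ) • 𝟙 (DerivedCategory.Q.obj _) = 0
  rw [← CategoryTheory.Functor.map_id, ← Functor.map_zsmul, h1,
    CategoryTheory.Functor.map_zero]

lemma cancel23 {X Y : DerivedCategory (ModuleCat ℤ)} {f : X ⟶ Y}
    (h2 : (2 : ℤ) • f = 0) (h3 : (3 : ℤ) • f = 0) : f = 0 := by
  have : ((3 : ℤ) - 2) • f = 0 := by rw [sub_smul, h2, h3, sub_zero]
  simpa using this

lemma three_smul_shift {X : DerivedCategory (ModuleCat ℤ)} (n : ℤ)
    (f : Cobj⟦n⟧ ⟶ X) : (3 : ℤ) • f = 0 := by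
  have h1 : (3 : ℤ) • 𝟙 (Cobj⟦n⟧) = 0 := by
    show (3 : ℤ) • 𝟙 ((shiftFunctor (DerivedCategory (ModuleCat ℤ)) n).obj Cobj) = 0
    rw [← CategoryTheory.Functor.map_id, ← Functor.map_zsmul, three_smul_id_Cobj,
      CategoryTheory.Functor.map_zero]
  rw [← Category.id_comp f, ← Preadditive.zsmul_comp, h1, zero_comp]

lemma smul_kill {X : DerivedCategory (ModuleCat ℤ)} (n : ℤ)
    (f : Cobj⟦n⟧ ⟶ X) (h2 : (2 : ℤ) • f = 0) : f = 0 :=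
  cancel23 h2 (three_smul_shift n f)

lemma iso_smul_id {C : Type*} [Category C] [Preadditive C] {A B : C} (e : A ≅ B) (n : ℤ)
    (h : IsIso (n • 𝟙 A)) : IsIso (n • 𝟙 B) := by
  have he : n • 𝟙 B = e.inv ≫ (n • 𝟙 A) ≫ e.hom := by simp
  rw [he]
  infer_instance

lemma two_not_iso : ¬ IsIso ((2 : ℤ) • 𝟙 Mobj) := by
  intro h
  set F := DerivedCategory.homologyFunctor (ModuleCat ℤ) 0 with hF
  have h1 : IsIso (F.map ((2 : ℤ) • 𝟙 Mobj)) := inferInstance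
  rw [Functor.map_zsmul, CategoryTheory.Functor.map_id] at h1
  have h1' : IsIso ((2 : ℤ) • 𝟙 ((DerivedCategory.Q ⋙ F).obj Mcplx)) := h1
  have h2 := iso_smul_id ((DerivedCategory.homologyFunctorFactors (ModuleCat ℤ) 0).app Mcplx) 2 h1'
  have h2' : IsIso ((2 : ℤ) • 𝟙 ((Mcplx.sc 0).homology)) := h2
  have hfz : (Mcplx.sc 0).f = 0 := rfl
  have hgz : (Mcplx.sc 0).g = 0 := rfl
  have h3 := iso_smul_id
    (ShortComplex.HomologyData.ofZeros (Mcplx.sc 0) hfz hgz).left.homologyIso 2 h2'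
  have h3' : IsIso ((2 : ℤ) • 𝟙 (ModuleCat.of ℤ (ZMod 2))) := h3
  rw [two_smul_id_zmod2] at h3'
  have h5 : IsZero (ModuleCat.of ℤ (ZMod 2)) := by
    rw [IsZero.iff_id_eq_zero]
    calc 𝟙 _ = 0 ≫ inv (0 : ModuleCat.of ℤ (ZMod 2) ⟶ ModuleCat.of ℤ (ZMod 2)) :=
          (IsIso.hom_inv_id _).symm
    _ = 0 := zero_comp
  have h7 := h5.eq_of_src (𝟙 (ModuleCat.of ℤ (ZMod 2))) 0
  have h6 : (1 : ZMod 2) = 0 :=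
    congrArg (fun φ : ModuleCat.of ℤ (ZMod 2) ⟶ ModuleCat.of ℤ (ZMod 2) => φ.hom (1 : ZMod 2)) h7
  exact absurd h6 (by decide)

theorem stmt12 :
    (∀ (n : ℤ) (f : Cobj⟦n⟧ ⟶ Mobj), (2 : ℤ) • f = 0 → f = 0) ∧
    ∀ (K : DerivedCategory (ModuleCat ℤ)) (g : Mobj ⟶ K) (h : K ⟶ Mobj⟦(1:ℤ)⟧),
      (Triangle.mk ((2 : ℤ) • 𝟙 Mobj) g h ∈ distTriang (DerivedCategory (ModuleCat ℤ))) →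
        ¬ IsZero K ∧ ∀ (n : ℤ) (f : Cobj⟦n⟧ ⟶ K), f = 0 := by
  constructor
  · intro n f h2
    exact smul_kill n f h2
  · intro K g h hT
    refine ⟨?_, ?_⟩
    · intro hz
      exact two_not_iso ((Triangle.isZero₃_iff_isIso₁ _ hT).1 hz)
    · intro n f
      have h2h : (2 : ℤ) • h = 0 := by
        have c : h ≫ ((2 : ℤ) • 𝟙 Mobj)⟦(1:ℤ)⟧' = 0 := comp_distTriang_mor_zero₃₁ _ hT
        rw [Functor.map_zsmul, CategoryTheory.Functor.map_id, Preadditive.comp_zsmul,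
          Category.comp_id] at c
        exact c
      have h2g : (2 : ℤ) • g = 0 := by
        have c : ((2 : ℤ) • 𝟙 Mobj) ≫ g = 0 := comp_distTriang_mor_zero₁₂ _ hT
        rw [Preadditive.zsmul_comp, Category.id_comp] at c
        exact c
      have hfh : f ≫ h = 0 := by
        refine cancel23 ?_ (three_smul_shift n _)
        rw [← Preadditive.comp_zsmul, h2h, comp_zero]
      obtain ⟨u, hu⟩ := Triangle.coyoneda_exact₃ _ hT f hfh
      refine smul_kill n f ?_
      rw [hu]
      show (2 : ℤ) • (u ≫ g) = 0
      exact (Preadditive.comp_zsmul (f := u) (g := g) 2).symm.trans ((congrArg (u ≫ ·) h2g).trans comp_zero)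


end
end

section
/- Let $A$ be a commutative ring, $M$ an $A$-module, and $x_1, \ldots, x_t \in A$. If both $x_1, \ldots, x_i, \ldots, x_t$ and $x_1, \ldots, x_i', \ldots, x_t$ are weakly $M$-regular sequences (each element is a non-zero divisor on the quotient of $M$ by the ideal generated by the preceding elements), then $x_1, \ldots, x_i x_i', \ldots, x_t$ is also a weakly $M$-regular sequence. -/
/-!
STATEMENT 13: If both `x₁, …, xᵢ, …, x_t` and `x₁, …, xᵢ', …, x_t` are weakly
`M`-regular sequences over a commutative ring `A`, then so is `x₁, …, xᵢxᵢ', …, x_t`.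
The two given sequences differ only in the `i`-th spot; we encode them as
`as.set i a` and `as.set i b` for a list `as` of length `t`.
-/

open RingTheory.Sequence Submodule Function
open scoped Pointwise

section Aux

variable {R : Type*} [CommRing R]

lemma mem_smul_top_iff_exists' {N : Type*} [AddCommGroup N] [Module R N] {r : R} {x : N} :
    x ∈ (r • ⊤ : Submodule R N) ↔ ∃ y, r • y = x := by
  constructor
  · intro h
    obtain ⟨y, -, hy⟩ := Set.mem_smul_set.mp h
    exact ⟨y, hy⟩
  · rintro ⟨y, rfl⟩
    exact Submodule.smul_mem_pointwise_smul _ _ _ trivial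

/-- Injectivity of the induced map on `M⧸rM` given `r` regular on the cokernel. -/
lemma quotSMulTop_map_injective {N₁ N N₂ : Type*}
    [AddCommGroup N₁] [AddCommGroup N] [AddCommGroup N₂]
    [Module R N₁] [Module R N] [Module R N₂] (r : R)
    {f : N₁ →ₗ[R] N} {g : N →ₗ[R] N₂} (hf : Injective f) (hfg : Exact f g)
    (hr : IsSMulRegular N₂ r) : Injective (QuotSMulTop.map r f) := by
  rw [← LinearMap.ker_eq_bot, eq_bot_iff]
  rintro x hx
  obtain ⟨y, rfl⟩ := Submodule.mkQ_surjective _ x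
  simp only [LinearMap.mem_ker, Submodule.mkQ_apply, QuotSMulTop.map_apply_mk,
    Submodule.Quotient.mk_eq_zero] at hx
  obtain ⟨z, hz⟩ := mem_smul_top_iff_exists'.mp hx
  have hgz : g z = 0 := hr.right_eq_zero_of_smul <| by
    rw [← map_smul, hz, hfg.apply_apply_eq_zero]
  obtain ⟨w, hw⟩ := (hfg z).mp hgz
  have hy : y = r • w := hf (by rw [map_smul, hw, hz])
  rw [Submodule.mem_bot, Submodule.mkQ_apply, Submodule.Quotient.mk_eq_zero, hy]
  exact mem_smul_top_iff_exists'.mpr ⟨w, rfl⟩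

/-- Weak regularity transfers along a short exact sequence. -/
lemma isWeaklyRegular_of_exact {rs : List R} :
    ∀ {N₁ N N₂ : Type*} [AddCommGroup N₁] [AddCommGroup N] [AddCommGroup N₂]
      [Module R N₁] [Module R N] [Module R N₂]
      (f : N₁ →ₗ[R] N) (g : N →ₗ[R] N₂), Injective f → Surjective g → Exact f g →
      IsWeaklyRegular N₁ rs → IsWeaklyRegular N₂ rs → IsWeaklyRegular N rs := by
  induction rs with
  | nil => intros; exact .nil _ _
  | cons r rs ih =>
    intro N₁ N N₂ _ _ _ _ _ _ f g hf hg hfg h₁ h₂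
    rw [isWeaklyRegular_cons_iff] at h₁ h₂ ⊢
    obtain ⟨h₁r, h₁rs⟩ := h₁
    obtain ⟨h₂r, h₂rs⟩ := h₂
    refine ⟨isSMulRegular_of_range_eq_ker hf (LinearMap.exact_iff.mp hfg).symm h₁r h₂r, ?_⟩
    exact ih (QuotSMulTop.map r f) (QuotSMulTop.map r g)
      (quotSMulTop_map_injective r hf hfg h₂r)
      (QuotSMulTop.map_surjective r hg)
      (QuotSMulTop.map_exact r hfg hg) h₁rs h₂rs

/-- The key step: if `a :: rs` and `b :: rs` are weakly regular then so is `a * b :: rs`. -/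
lemma isWeaklyRegular_mul_cons {N : Type*} [AddCommGroup N] [Module R N]
    {a b : R} {rs : List R} (h₁ : IsWeaklyRegular N (a :: rs))
    (h₂ : IsWeaklyRegular N (b :: rs)) : IsWeaklyRegular N (a * b :: rs) := by
  rw [isWeaklyRegular_cons_iff] at h₁ h₂ ⊢
  obtain ⟨ha, hars⟩ := h₁
  obtain ⟨hb, hbrs⟩ := h₂
  refine ⟨ha.mul hb, ?_⟩
  -- Build the short exact sequence `0 → N⧸bN → N⧸abN → N⧸aN → 0`.
  have hle₁ : (b • ⊤ : Submodule R N) ≤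
      Submodule.comap (a • (LinearMap.id : N →ₗ[R] N)) ((a * b) • (⊤ : Submodule R N)) := by
    rintro x hx
    obtain ⟨y, rfl⟩ := mem_smul_top_iff_exists'.mp hx
    simp only [Submodule.mem_comap, LinearMap.smul_apply, LinearMap.id_apply]
    exact mem_smul_top_iff_exists'.mpr ⟨y, by rw [mul_smul, smul_comm]⟩
  have hle₂ : ((a * b) • (⊤ : Submodule R N)) ≤
      Submodule.comap (LinearMap.id : N →ₗ[R] N) (a • (⊤ : Submodule R N)) := by
    rintro x hx
    obtain ⟨y, rfl⟩ := mem_smul_top_iff_exists'.mp hx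
    simp only [Submodule.mem_comap, LinearMap.id_apply]
    exact mem_smul_top_iff_exists'.mpr ⟨b • y, by rw [mul_smul]⟩
  set f : QuotSMulTop b N →ₗ[R] QuotSMulTop (a * b) N :=
    Submodule.mapQ _ _ (a • (LinearMap.id : N →ₗ[R] N)) hle₁ with hfdef
  set g : QuotSMulTop (a * b) N →ₗ[R] QuotSMulTop a N :=
    Submodule.mapQ _ _ (LinearMap.id : N →ₗ[R] N) hle₂ with hgdef
  have hfmk : ∀ y : N, f (Submodule.Quotient.mk y) =
      Submodule.Quotient.mk (a • y) := fun y => by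
    simp [hfdef, Submodule.mapQ_apply]
  have hgmk : ∀ y : N, g (Submodule.Quotient.mk y) =
      Submodule.Quotient.mk y := fun y => by
    simp [hgdef, Submodule.mapQ_apply]
  have hf : Injective f := by
    rw [← LinearMap.ker_eq_bot, eq_bot_iff]
    rintro x hx
    obtain ⟨y, rfl⟩ := Submodule.mkQ_surjective _ x
    rw [LinearMap.mem_ker, Submodule.mkQ_apply, hfmk, Submodule.Quotient.mk_eq_zero] at hx
    obtain ⟨z, hz⟩ := mem_smul_top_iff_exists'.mp hx
    rw [Submodule.mem_bot, Submodule.mkQ_apply, Submodule.Quotient.mk_eq_zero]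
    have : a • (b • z) = a • y := by rw [← mul_smul]; exact hz
    exact mem_smul_top_iff_exists'.mpr ⟨z, ha this⟩
  have hg : Surjective g := by
    intro x
    obtain ⟨y, rfl⟩ := Submodule.mkQ_surjective _ x
    exact ⟨Submodule.Quotient.mk y, hgmk y⟩
  have hfg : Exact f g := by
    intro x
    obtain ⟨y, rfl⟩ := Submodule.mkQ_surjective _ x
    rw [Submodule.mkQ_apply, hgmk, Submodule.Quotient.mk_eq_zero]
    constructor
    · intro hy
      obtain ⟨z, rfl⟩ := mem_smul_top_iff_exists'.mp hy
      exact ⟨Submodule.Quotient.mk z, hfmk z⟩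
    · rintro ⟨w, hw⟩
      obtain ⟨v, rfl⟩ := Submodule.mkQ_surjective _ w
      rw [Submodule.mkQ_apply, hfmk] at hw
      have hmem : y - a • v ∈ ((a * b) • (⊤ : Submodule R N)) := by
        rw [← Submodule.Quotient.eq]
        exact hw.symm
      obtain ⟨z, hz⟩ := mem_smul_top_iff_exists'.mp hmem
      refine mem_smul_top_iff_exists'.mpr ⟨b • z + v, ?_⟩
      rw [smul_add, ← mul_smul, hz]
      abel
  exact isWeaklyRegular_of_exact f g hf hg hfg hbrs hars

end Aux

theorem stmt13 (A : Type*) [CommRing A] (M : Type*) [AddCommGroup M] [Module A M]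
    (as : List A) (i : ℕ) (hi : i < as.length) (a b : A)
    (h1 : RingTheory.Sequence.IsWeaklyRegular M (as.set i a))
    (h2 : RingTheory.Sequence.IsWeaklyRegular M (as.set i b)) :
    RingTheory.Sequence.IsWeaklyRegular M (as.set i (a * b)) := by
  have hset : ∀ c : A, as.set i c = as.take i ++ c :: as.drop (i + 1) := fun c =>
    List.set_eq_take_cons_drop c hi
  rw [hset] at h1 h2 ⊢
  rw [isWeaklyRegular_append_iff] at h1 h2 ⊢
  exact ⟨h1.1, isWeaklyRegular_mul_cons h1.2 h2.2⟩
end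

section
/- Let $\mathcal{T}$ be an $R$-linear triangulated category, $C, M \in \mathcal{T}$, and let $x_1, \ldots, x_t \in R$ be a weakly $(C,M)$-regular sequence (each $x_s$ is a non-zero divisor on $\mathrm{Hom}^*_{\mathcal{T}}(C, M /\!\!/ (x_1,\ldots,x_{s-1}))$). Then there is an isomorphism of graded $R$-modules $\mathrm{Hom}^*_{\mathcal{T}}(C, M)/(x_1, \ldots, x_t)\mathrm{Hom}^*_{\mathcal{T}}(C, M) \cong \mathrm{Hom}^*_{\mathcal{T}}(C, \Sigma^{-|x_1|-\cdots-|x_t|}(M /\!\!/ (x_1, \ldots, x_t)))$. -/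
open CategoryTheory Category Limits Pretriangulated

universe v u

variable (T : Type u) [Category.{v} T] [Preadditive T] [HasZeroObject T]
  [HasShift T ℤ] [∀ n : ℤ, (CategoryTheory.shiftFunctor T n).Additive] [Pretriangulated T]

/-!
STATEMENT 16: Let `x₁, …, x_t` be a weakly `(C, M)`-regular sequence of homogeneous
central elements (each `x_{s+1}` is a non-zero divisor on
`Hom^*_T(C, M ⫽ (x₁, …, x_s))`), where the iterated Koszul objects are the chosen
objects `K s` with `K 0 = M` and exact triangles
`K s ⟶ Σ^{|x_{s+1}|} K s ⟶ K (s+1) ⟶ Σ K s`.  Then for every degree `n` there is an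
isomorphism (of each graded piece, of graded `R`-modules)
`Hom^*_T(C, M)/(x₁, …, x_t)·Hom^*_T(C, M) ≅ Hom^*_T(C, Σ^{-|x₁|-⋯-|x_t|}(M ⫽ (x₁,…,x_t)))`;
the degree-`n` piece of the left-hand side is the quotient of `C⟦n⟧ ⟶ M` by the
subgroup generated by the `x_s`-multiples, and the corresponding piece of the
right-hand side is `C⟦n + |x₁| + ⋯ + |x_t|⟧ ⟶ K t`.
-/

-- coherence lemma for shiftFunctorAdd'
lemma auxAdd'Comm (m₁ m₂ m₃ k : ℤ) (hk : m₂ + m₃ = k) (X : T) :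
    (shiftFunctorComm T m₁ k).hom.app X ≫ ((shiftFunctorAdd' T m₂ m₃ k hk).hom.app X)⟦m₁⟧' =
      (shiftFunctorAdd' T m₂ m₃ k hk).hom.app (X⟦m₁⟧) ≫
        ((shiftFunctorComm T m₁ m₂).hom.app X)⟦m₃⟧' ≫
        (shiftFunctorComm T m₁ m₃).hom.app (X⟦m₂⟧) := by
  subst hk
  rw [shiftFunctorAdd'_eq_shiftFunctorAdd]
  exact shiftFunctorComm_hom_app_comp_shift_shiftFunctorAdd_hom_app m₁ m₂ m₃ X

set_option linter.unusedSectionVars false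

set_option maxHeartbeats 1000000

variable {T}

lemma auxStepUp {dx : ℤ} (x : CentralElement T dx) (e : ℤ) (M : T)
    (hP : ∃ c : ℤˣ, x.app ((shiftFunctor T e).obj M) =
      (c : ℤ) • ((shiftFunctor T e).map (x.app M) ≫ (shiftFunctorComm T dx e).hom.app M)) :
    ∃ c : ℤˣ, x.app ((shiftFunctor T (e+1)).obj M) =
      (c : ℤ) • ((shiftFunctor T (e+1)).map (x.app M) ≫
        (shiftFunctorComm T dx (e+1)).hom.app M) := by
  obtain ⟨c, hc⟩ := hP
  refine ⟨(-1:ℤˣ)^dx * c, ?_⟩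
  have hβ := x.natural ((shiftFunctorAdd' T e 1 (e+1) rfl).hom.app M)
  have hnat := (shiftFunctorAdd' T e 1 (e+1) rfl).hom.naturality (x.app M)
  simp only [Functor.comp_obj, Functor.comp_map] at hβ hnat
  rw [← cancel_mono (((shiftFunctorAdd' T e 1 (e+1) rfl).hom.app M)⟦dx⟧')]
  rw [hβ, x.shift_comm ((shiftFunctor T e).obj M), hc]
  simp only [Preadditive.comp_zsmul, Preadditive.zsmul_comp, Functor.map_zsmul, Category.assoc,
    Units.val_mul, Functor.comp_map, Functor.comp_obj, mul_smul, Functor.map_comp, shiftComm,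
    Iso.app_hom]
  congr 1
  congr 1
  rw [auxAdd'Comm T dx e 1 (e+1) rfl M, reassoc_of% hnat]

lemma auxStepDown {dx : ℤ} (x : CentralElement T dx) (e : ℤ) (M : T)
    (hP : ∃ c : ℤˣ, x.app ((shiftFunctor T e).obj M) =
      (c : ℤ) • ((shiftFunctor T e).map (x.app M) ≫ (shiftFunctorComm T dx e).hom.app M)) :
    ∃ c : ℤˣ, x.app ((shiftFunctor T (e-1)).obj M) =
      (c : ℤ) • ((shiftFunctor T (e-1)).map (x.app M) ≫
        (shiftFunctorComm T dx (e-1)).hom.app M) := by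
  obtain ⟨c, hc⟩ := hP
  refine ⟨((-1:ℤˣ)^dx)⁻¹ * c, ?_⟩
  have hβ := x.natural ((shiftFunctorAdd' T (e-1) 1 e (by ring)).hom.app M)
  have hnat := (shiftFunctorAdd' T (e-1) 1 e (by ring)).hom.naturality (x.app M)
  simp only [Functor.comp_obj, Functor.comp_map] at hβ hnat
  apply (shiftFunctor T (1:ℤ)).map_injective
  have key : x.app ((shiftFunctor T 1).obj ((shiftFunctor T (e-1)).obj M)) =
      (c : ℤ) • ((shiftFunctor T 1).map ((shiftFunctor T (e-1)).map (x.app M)) ≫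
        ((shiftFunctorComm T dx (e-1)).hom.app M)⟦(1:ℤ)⟧' ≫
        (shiftFunctorComm T dx 1).hom.app ((shiftFunctor T (e-1)).obj M)) := by
    rw [← cancel_epi ((shiftFunctorAdd' T (e-1) 1 e (by ring)).hom.app M), ← hβ, hc]
    simp only [Preadditive.comp_zsmul, Preadditive.zsmul_comp, Category.assoc]
    congr 1
    rw [auxAdd'Comm T dx (e-1) 1 e (by ring) M, reassoc_of% hnat]
  have ax := x.shift_comm ((shiftFunctor T (e-1)).obj M)
  rw [key] at ax
  -- ax : c • (A ≫ comm1) = c₁ • (B ≫ comm1)  where we want B = goal-lhs-image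
  simp only [shiftComm, Iso.app_hom] at ax
  rw [Functor.map_zsmul, Functor.map_comp]
  have := congrArg (fun z => (((-1:ℤˣ)^dx)⁻¹ : ℤˣ) • z ≫ (shiftFunctorComm T dx 1).inv.app ((shiftFunctor T (e-1)).obj M)) ax
  simp only [Preadditive.zsmul_comp, Category.assoc, Iso.hom_inv_id_app, Functor.comp_obj,
    Category.comp_id, smul_smul, Units.smul_def] at this
  simp only [← Units.val_mul, inv_mul_cancel, Units.val_one, one_smul] at this
  exact this.symm

lemma auxL1 {dx : ℤ} (x : CentralElement T dx) (e : ℤ) (M : T) :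
    ∃ c : ℤˣ, x.app ((shiftFunctor T e).obj M) =
      (c : ℤ) • ((shiftFunctor T e).map (x.app M) ≫ (shiftFunctorComm T dx e).hom.app M) := by
  induction e using Int.induction_on with
  | zero =>
    refine ⟨1, ?_⟩
    have hnat := (shiftFunctorZero T ℤ).hom.naturality (x.app M)
    have hx := x.natural ((shiftFunctorZero T ℤ).hom.app M)
    simp only [Functor.id_obj, Functor.id_map] at hnat
    rw [shiftFunctorComm_zero_hom_app, Units.val_one, one_smul,
      ← cancel_mono (((shiftFunctorZero T ℤ).hom.app M)⟦dx⟧'), hx]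
    simp only [Category.assoc, ← Functor.map_comp, Iso.inv_hom_id_app]
    rw [reassoc_of% hnat]
    simp
  | succ i hi => exact auxStepUp x i M hi
  | pred i hi => exact auxStepDown x (-i) M hi

/-- Iterated shift functor by degrees `d 0, …, d (t-1)`. -/
def auxSh (T : Type u) [Category.{v} T] [HasShift T ℤ] (d : ℕ → ℤ) : ℕ → T ⥤ T
  | 0 => Functor.id T
  | t+1 => auxSh T d t ⋙ shiftFunctor T (d t)

lemma auxShAdditive (d : ℕ → ℤ) : ∀ t : ℕ, (auxSh T d t).Additive
  | 0 => by dsimp [auxSh]; infer_instance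
  | t+1 => by
      dsimp [auxSh]
      haveI := auxShAdditive d t
      infer_instance

variable {d : ℕ → ℤ} {K : ℕ → T} {M : T}

/-- Iterated composition with the Koszul triangle maps. -/
def auxPsi (hK0 : K 0 = M) (g : ∀ s : ℕ, (K s)⟦d s⟧ ⟶ K (s + 1)) :
    ∀ (t : ℕ) {X : T}, (X ⟶ M) → ((auxSh T d t).obj X ⟶ K t)
  | 0, _, f => f ≫ eqToHom hK0.symm
  | t+1, _, f => (auxPsi hK0 g t f)⟦d t⟧' ≫ g t

lemma auxPsi_zero (hK0 : K 0 = M) (g : ∀ s : ℕ, (K s)⟦d s⟧ ⟶ K (s + 1)) (t : ℕ) (X : T) :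
    auxPsi hK0 g t (0 : X ⟶ M) = 0 := by
  induction t with
  | zero => simp [auxPsi]; exact Limits.zero_comp
  | succ t ih => simp [auxPsi, ih]; exact Limits.zero_comp

lemma auxPsi_add (hK0 : K 0 = M) (g : ∀ s : ℕ, (K s)⟦d s⟧ ⟶ K (s + 1)) (t : ℕ) {X : T}
    (f f' : X ⟶ M) : auxPsi hK0 g t (f + f') = auxPsi hK0 g t f + auxPsi hK0 g t f' := by
  induction t with
  | zero => simp [auxPsi, Preadditive.add_comp]; exact Preadditive.add_comp _ _ _ _ _ _
  | succ t ih => simp [auxPsi, ih, Preadditive.add_comp]; exact Preadditive.add_comp _ _ _ _ _ _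

lemma auxPsi_natural (hK0 : K 0 = M) (g : ∀ s : ℕ, (K s)⟦d s⟧ ⟶ K (s + 1)) (t : ℕ) {X Y : T}
    (u : Y ⟶ X) (f : X ⟶ M) :
    auxPsi hK0 g t (u ≫ f) = (auxSh T d t).map u ≫ auxPsi hK0 g t f := by
  induction t with
  | zero => simp [auxPsi, auxSh]
  | succ t ih => simp [auxPsi, auxSh, ih, Functor.map_comp]

/-- `auxPsi` as an additive map. -/
def auxPsiHom (hK0 : K 0 = M) (g : ∀ s : ℕ, (K s)⟦d s⟧ ⟶ K (s + 1)) (t : ℕ) (X : T) :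
    (X ⟶ M) →+ ((auxSh T d t).obj X ⟶ K t) :=
  AddMonoidHom.mk' (auxPsi hK0 g t) (auxPsi_add hK0 g t)

/-- `X` is isomorphic to some shift of `C`. -/
def AuxShifty (C X : T) : Prop := ∃ m : ℤ, Nonempty (X ≅ (shiftFunctor T m).obj C)

lemma auxShifty_shift {C X : T} (hX : AuxShifty C X) (e : ℤ) :
    AuxShifty C ((shiftFunctor T e).obj X) := by
  obtain ⟨m, ⟨η⟩⟩ := hX
  exact ⟨m + e, ⟨(shiftFunctor T e).mapIso η ≪≫
    ((shiftFunctorAdd' T m e (m + e) rfl).app C).symm⟩⟩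

lemma auxShifty_sh {C X : T} (hX : AuxShifty C X) (t : ℕ) :
    AuxShifty C ((auxSh T d t).obj X) := by
  induction t with
  | zero => exact hX
  | succ t ih => exact auxShifty_shift ih (d t)

lemma auxReg' {dx : ℤ} {x : CentralElement T dx} {C N X : T} (hx : IsRegularOn T x C N)
    (hX : AuxShifty C X) (f : X ⟶ N) (hf : f ≫ x.app N = 0) : f = 0 := by
  obtain ⟨m, ⟨η⟩⟩ := hX
  have h0 : η.inv ≫ f = 0 := hx m (η.inv ≫ f) (by rw [Category.assoc, hf, Limits.comp_zero])
  calc f = η.hom ≫ (η.inv ≫ f) := by simp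
  _ = 0 := by rw [h0, Limits.comp_zero]

lemma auxReg1 {dx : ℤ} {x : CentralElement T dx} {C N X : T} (hx : IsRegularOn T x C N)
    (hX : AuxShifty C X) (v : X ⟶ N⟦(1:ℤ)⟧) (hv : v ≫ (x.app N)⟦(1:ℤ)⟧' = 0) : v = 0 := by
  obtain ⟨m, ⟨η⟩⟩ := hX
  have η₂ : X ≅ (C⟦m - 1⟧)⟦(1:ℤ)⟧ :=
    η ≪≫ (shiftFunctorAdd' T (m - 1) 1 m (by ring)).app C
  set v₀ := (shiftFunctor T (1:ℤ)).preimage (η₂.inv ≫ v) with hv₀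
  have hm : v₀⟦(1:ℤ)⟧' = η₂.inv ≫ v := (shiftFunctor T (1:ℤ)).map_preimage _
  have : v₀ ≫ x.app N = 0 := by
    apply (shiftFunctor T (1:ℤ)).map_injective
    rw [Functor.map_comp, hm, Category.assoc, hv, Limits.comp_zero, Functor.map_zero]
  have hz : v₀ = 0 := hx (m - 1) v₀ this
  have : η₂.inv ≫ v = 0 := by rw [← hm, hz, Functor.map_zero]
  calc v = η₂.hom ≫ (η₂.inv ≫ v) := by simp
  _ = 0 := by rw [this, Limits.comp_zero]

lemma auxComm {dx : ℤ} (x : CentralElement T dx) (t : ℕ) (X : T) :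
    ∃ (c : ℤˣ) (u : (shiftFunctor T dx).obj ((auxSh T d t).obj X) ≅
        (auxSh T d t).obj ((shiftFunctor T dx).obj X)),
      (auxSh T d t).map (x.app X) = (c : ℤ) • (x.app ((auxSh T d t).obj X) ≫ u.hom) := by
  induction t with
  | zero => exact ⟨1, Iso.refl _, by simp [auxSh]; exact (one_zsmul _).symm⟩
  | succ t ih =>
    obtain ⟨c, u, hu⟩ := ih
    obtain ⟨c', hc'⟩ := auxL1 x (d t) ((auxSh T d t).obj X)
    have h2 : (shiftFunctor T (d t)).map (x.app ((auxSh T d t).obj X)) =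
        ((c'⁻¹ : ℤˣ) : ℤ) • (x.app ((shiftFunctor T (d t)).obj ((auxSh T d t).obj X)) ≫
          (shiftFunctorComm T dx (d t)).inv.app ((auxSh T d t).obj X)) := by
      rw [hc']
      simp only [Preadditive.zsmul_comp, Category.assoc, Iso.hom_inv_id_app, Functor.comp_obj,
        Category.comp_id, smul_smul, ← Units.val_mul, inv_mul_cancel, Units.val_one, one_smul]
    refine ⟨c * c'⁻¹, ((shiftFunctorComm T dx (d t)).app ((auxSh T d t).obj X)).symm ≪≫
      (shiftFunctor T (d t)).mapIso u, ?_⟩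
    show (shiftFunctor T (d t)).map ((auxSh T d t).map (x.app X)) = _
    rw [hu, Functor.map_zsmul, Functor.map_comp, h2]
    simp only [Preadditive.zsmul_comp, Preadditive.comp_zsmul, smul_smul, Units.val_mul,
      Category.assoc, Iso.trans_hom, Iso.symm_hom, Iso.app_inv, Functor.mapIso_hom]
    rw [mul_comm]
    rfl

lemma auxSurj {C : T} (x : ∀ s : ℕ, CentralElement T (d s)) (hK0 : K 0 = M)
    (g : ∀ s : ℕ, (K s)⟦d s⟧ ⟶ K (s + 1)) (h : ∀ s : ℕ, K (s + 1) ⟶ (K s)⟦(1:ℤ)⟧) :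
    ∀ t : ℕ, (∀ s < t, Triangle.mk ((x s).app (K s)) (g s) (h s) ∈ distTriang T) →
    (∀ s < t, IsRegularOn T (x s) C (K s)) → ∀ {X : T}, AuxShifty C X →
    Function.Surjective (fun f : X ⟶ M => auxPsi hK0 g t f) := by
  intro t
  induction t with
  | zero =>
    intro _ _ X hX u
    exact ⟨u ≫ eqToHom hK0, by simp [auxPsi]; exact (Category.assoc _ _ _).trans (by simp)⟩
  | succ t ih =>
    intro ht hreg X hX u
    have hdist := ht t (Nat.lt_succ_self t)
    have hu3 : u ≫ h t = 0 := by
      apply auxReg1 (hreg t (Nat.lt_succ_self t)) (auxShifty_shift (auxShifty_sh hX t) (d t))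
      have hz := comp_distTriang_mor_zero₃₁ _ hdist
      simp only [Triangle.mk_mor₁, Triangle.mk_mor₃] at hz
      exact (Category.assoc _ _ _).trans ((congrArg (u ≫ ·) hz).trans Limits.comp_zero)
    obtain ⟨w, hw⟩ := Triangle.coyoneda_exact₃ _ hdist u hu3
    obtain ⟨f, hf⟩ := ih (fun s hs => ht s (hs.trans (Nat.lt_succ_self t)))
      (fun s hs => hreg s (hs.trans (Nat.lt_succ_self t))) hX
      ((shiftFunctor T (d t)).preimage w)
    refine ⟨f, ?_⟩
    show (auxPsi hK0 g t f)⟦d t⟧' ≫ g t = u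
    dsimp only at hf
    rw [hf]
    exact (congrArg (· ≫ g t) ((shiftFunctor T (d t)).map_preimage w)).trans hw.symm

lemma auxPsi_sub (hK0 : K 0 = M) (g : ∀ s : ℕ, (K s)⟦d s⟧ ⟶ K (s + 1)) (t : ℕ) {X : T}
    (f f' : X ⟶ M) : auxPsi hK0 g t (f - f') = auxPsi hK0 g t f - auxPsi hK0 g t f' :=
  (auxPsiHom hK0 g t X).map_sub f f'

lemma auxKer {C : T} (x : ∀ s : ℕ, CentralElement T (d s)) (hK0 : K 0 = M)
    (g : ∀ s : ℕ, (K s)⟦d s⟧ ⟶ K (s + 1)) (h : ∀ s : ℕ, K (s + 1) ⟶ (K s)⟦(1:ℤ)⟧) :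
    ∀ t : ℕ, (∀ s < t, Triangle.mk ((x s).app (K s)) (g s) (h s) ∈ distTriang T) →
    (∀ s < t, IsRegularOn T (x s) C (K s)) → ∀ {X : T}, AuxShifty C X → ∀ f : X ⟶ M,
    (auxPsi hK0 g t f = 0 ↔ f ∈ AddSubgroup.closure
      {f : X ⟶ M | ∃ s, s < t ∧ ∃ w : (shiftFunctor T (d s)).obj X ⟶ M,
        f = (x s).app X ≫ w}) := by
  intro t
  induction t with
  | zero =>
    intro _ _ X hX f
    have hemp : {f : X ⟶ M | ∃ s, s < 0 ∧ ∃ w : (shiftFunctor T (d s)).obj X ⟶ M,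
        f = (x s).app X ≫ w} = (∅ : Set _) := by
      ext f; simp
    rw [hemp, AddSubgroup.closure_empty, AddSubgroup.mem_bot]
    show f ≫ eqToHom hK0.symm = 0 ↔ f = 0
    constructor
    · intro hf
      have := congrArg (fun z => z ≫ eqToHom hK0) hf
      simpa using this
    · intro hf; rw [hf, Limits.zero_comp]
  | succ t ih =>
    intro ht hreg X hX f
    have hdist := ht t (Nat.lt_succ_self t)
    have ht' := fun s (hs : s < t) => ht s (hs.trans (Nat.lt_succ_self t))
    have hreg' := fun s (hs : s < t) => hreg s (hs.trans (Nat.lt_succ_self t))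
    obtain ⟨c, u, hu⟩ := auxComm (x := x t) t X
    have hmor12 := comp_distTriang_mor_zero₁₂ _ hdist
    simp only [Triangle.mk_mor₁, Triangle.mk_mor₂] at hmor12
    -- key computation : psi (t+1) of an x_t multiple vanishes
    have hkill : ∀ w : (shiftFunctor T (d t)).obj X ⟶ M,
        auxPsi hK0 g (t+1) ((x t).app X ≫ w) = 0 := by
      intro w
      obtain ⟨c', hc'⟩ := auxL1 (x t) (d t) ((auxSh T d t).obj X)
      rw [shiftFunctorComm_eq_refl] at hc'
      simp only [Iso.refl_hom, NatTrans.id_app, Functor.comp_obj, Category.comp_id] at hc'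
      have hv := (x t).natural (u.hom ≫ auxPsi hK0 g t w)
      have h2 : (shiftFunctor T (d t)).map ((x t).app ((auxSh T d t).obj X)) =
          ((c'⁻¹ : ℤˣ) : ℤ) •
            (x t).app ((shiftFunctor T (d t)).obj ((auxSh T d t).obj X)) := by
        rw [hc', smul_smul, ← Units.val_mul, inv_mul_cancel, Units.val_one, one_smul]
      show (auxPsi hK0 g t ((x t).app X ≫ w))⟦d t⟧' ≫ g t = 0
      rw [auxPsi_natural, hu]
      simp only [Preadditive.zsmul_comp, Functor.map_zsmul, Category.assoc, Functor.map_comp]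
      rw [h2]
      simp only [Preadditive.zsmul_comp, smul_smul]
      rw [← Functor.map_comp_assoc, ← Category.assoc, hv, Category.assoc]
      exact (congrArg (fun z => ((c : ℤ) * ((c'⁻¹ : ℤˣ) : ℤ)) • ((u.hom ≫ auxPsi hK0 g t w) ≫ z))
        hmor12).trans ((congrArg (fun z => ((c : ℤ) * ((c'⁻¹ : ℤˣ) : ℤ)) • z) Limits.comp_zero).trans (smul_zero _))
    constructor
    · intro h0
      obtain ⟨w', hw'⟩ := Triangle.coyoneda_exact₂ _ hdist
        ((auxPsi hK0 g t f)⟦d t⟧') (h0 : (auxPsi hK0 g t f)⟦d t⟧' ≫ g t = 0)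
      let w'' : (shiftFunctor T (d t)).obj ((auxSh T d t).obj X) ⟶ K t := w'
      have hw'' : (auxPsi hK0 g t f)⟦d t⟧' = w'' ≫ (x t).app (K t) := hw'
      clear hw'
      have hnatq := (x t).natural (auxPsi hK0 g t f)
      have hsub : (auxPsi hK0 g t f - (x t).app ((auxSh T d t).obj X) ≫ w'') ≫
          (x t).app (K t) = 0 := by
        rw [Preadditive.sub_comp, ← hnatq, hw'', Category.assoc, sub_self]
      have hq : auxPsi hK0 g t f = (x t).app ((auxSh T d t).obj X) ≫ w'' :=
        sub_eq_zero.mp (auxReg' (hreg t (Nat.lt_succ_self t)) (auxShifty_sh hX t) _ hsub)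
      obtain ⟨w₀, hw₀⟩ := auxSurj x hK0 g h t ht' hreg' (auxShifty_shift hX (d t))
        (((c⁻¹ : ℤˣ) : ℤ) • (u.inv ≫ w''))
      dsimp only at hw₀
      have hpsif₀ : auxPsi hK0 g t ((x t).app X ≫ w₀) =
          (x t).app ((auxSh T d t).obj X) ≫ w'' := by
        rw [auxPsi_natural, hu, hw₀]
        simp only [Preadditive.zsmul_comp, Preadditive.comp_zsmul, smul_smul, Category.assoc,
          Iso.hom_inv_id_assoc]
        rw [← Units.val_mul, inv_mul_cancel, Units.val_one, one_smul]
      have hpsidiff : auxPsi hK0 g t (f - ((x t).app X ≫ w₀)) = 0 := by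
        rw [auxPsi_sub, hq, hpsif₀, sub_self]
      have hmemdiff := (ih ht' hreg' hX _).mp hpsidiff
      have hmono : AddSubgroup.closure {f : X ⟶ M | ∃ s, s < t ∧
            ∃ w : (shiftFunctor T (d s)).obj X ⟶ M, f = (x s).app X ≫ w} ≤
          AddSubgroup.closure {f : X ⟶ M | ∃ s, s < t + 1 ∧
            ∃ w : (shiftFunctor T (d s)).obj X ⟶ M, f = (x s).app X ≫ w} :=
        AddSubgroup.closure_mono (by
          rintro f' ⟨s, hs, w, hw⟩
          exact ⟨s, hs.trans (Nat.lt_succ_self t), w, hw⟩)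
      have hmem₀ : ((x t).app X ≫ w₀) ∈ AddSubgroup.closure {f : X ⟶ M | ∃ s, s < t + 1 ∧
            ∃ w : (shiftFunctor T (d s)).obj X ⟶ M, f = (x s).app X ≫ w} :=
        AddSubgroup.subset_closure ⟨t, Nat.lt_succ_self t, w₀, rfl⟩
      have := AddSubgroup.add_mem _ hmem₀ (hmono hmemdiff)
      simpa using this
    · intro hf
      have hle : AddSubgroup.closure {f : X ⟶ M | ∃ s, s < t + 1 ∧
            ∃ w : (shiftFunctor T (d s)).obj X ⟶ M, f = (x s).app X ≫ w} ≤
          (auxPsiHom hK0 g (t+1) X).ker := by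
        rw [AddSubgroup.closure_le]
        rintro f' ⟨s, hs, w, rfl⟩
        rcases Nat.lt_succ_iff_lt_or_eq.mp hs with hs' | rfl
        · have h1 : auxPsi hK0 g t ((x s).app X ≫ w) = 0 :=
            (ih ht' hreg' hX _).mpr (AddSubgroup.subset_closure ⟨s, hs', w, rfl⟩)
          have : (auxPsi hK0 g t ((x s).app X ≫ w))⟦d t⟧' ≫ g t = 0 := by
            rw [h1, Functor.map_zero, Limits.zero_comp]
          exact this
        · exact hkill w
      exact hle hf

lemma auxIota (d : ℕ → ℤ) (C : T) : ∀ (t : ℕ) (m : ℤ),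
    Nonempty ((shiftFunctor T (m + ∑ s ∈ Finset.range t, d s)).obj C ≅
      (auxSh T d t).obj ((shiftFunctor T m).obj C))
  | 0, m => ⟨eqToIso (by rw [Finset.sum_range_zero, add_zero]; rfl)⟩
  | t+1, m => by
    obtain ⟨ι⟩ := auxIota d C t m
    exact ⟨eqToIso (by rw [Finset.sum_range_succ, ← add_assoc]) ≪≫
      (shiftFunctorAdd' T (m + ∑ s ∈ Finset.range t, d s) (d t)
        (m + ∑ s ∈ Finset.range t, d s + d t) rfl).app C ≪≫
      (shiftFunctor T (d t)).mapIso ι⟩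

/-- Precomposition with an isomorphism, as an additive equivalence. -/
def auxPrecomp {A B N : T} (ι : A ≅ B) : (B ⟶ N) ≃+ (A ⟶ N) where
  toFun f := ι.hom ≫ f
  invFun f := ι.inv ≫ f
  left_inv f := by simp
  right_inv f := by simp
  map_add' f f' := by simp [Preadditive.comp_add]

theorem stmt16 (t : ℕ) (d : ℕ → ℤ) (x : ∀ s : ℕ, CentralElement T (d s))
    (C M : T) (K : ℕ → T) (hK0 : K 0 = M)
    (g : ∀ s : ℕ, (K s)⟦d s⟧ ⟶ K (s + 1)) (h : ∀ s : ℕ, K (s + 1) ⟶ (K s)⟦(1:ℤ)⟧)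
    (ht : ∀ s < t, Triangle.mk ((x s).app (K s)) (g s) (h s) ∈ distTriang T)
    (hreg : ∀ s < t, IsRegularOn T (x s) C (K s)) :
    ∀ n : ℤ, Nonempty
      (((C⟦n⟧ ⟶ M) ⧸ AddSubgroup.closure
          {f : C⟦n⟧ ⟶ M | ∃ s < t, ∃ f' : C⟦n + d s⟧ ⟶ M,
            f = (x s).app (C⟦n⟧) ≫
              (shiftFunctorAdd' T n (d s) (n + d s) rfl).inv.app C ≫ f'}) ≃+
        (C⟦n + ∑ s ∈ Finset.range t, d s⟧ ⟶ K t)) := by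
  intro n
  have hXc : AuxShifty C ((shiftFunctor T n).obj C) := ⟨n, ⟨Iso.refl _⟩⟩
  have hker := auxKer x hK0 g h t ht hreg hXc
  have hsurj : Function.Surjective (auxPsiHom hK0 g t (C⟦n⟧)) :=
    auxSurj x hK0 g h t ht hreg hXc
  have hsets : {f : C⟦n⟧ ⟶ M | ∃ s < t, ∃ f' : C⟦n + d s⟧ ⟶ M,
        f = (x s).app (C⟦n⟧) ≫ (shiftFunctorAdd' T n (d s) (n + d s) rfl).inv.app C ≫ f'} =
      {f : C⟦n⟧ ⟶ M | ∃ s, s < t ∧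
        ∃ w : (shiftFunctor T (d s)).obj (C⟦n⟧) ⟶ M, f = (x s).app (C⟦n⟧) ≫ w} := by
    ext f
    constructor
    · rintro ⟨s, hs, f', rfl⟩
      exact ⟨s, hs, _, rfl⟩
    · rintro ⟨s, hs, w, rfl⟩
      refine ⟨s, hs, (shiftFunctorAdd' T n (d s) (n + d s) rfl).hom.app C ≫ w, ?_⟩
      rw [Iso.inv_hom_id_app_assoc]
  have hkereq : AddSubgroup.closure {f : C⟦n⟧ ⟶ M | ∃ s < t, ∃ f' : C⟦n + d s⟧ ⟶ M,
        f = (x s).app (C⟦n⟧) ≫ (shiftFunctorAdd' T n (d s) (n + d s) rfl).inv.app C ≫ f'} =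
      (auxPsiHom hK0 g t (C⟦n⟧)).ker := by
    rw [hsets]
    ext f
    rw [AddMonoidHom.mem_ker]
    exact (hker f).symm
  obtain ⟨ι⟩ := auxIota d C t n
  rw [hkereq]
  exact ⟨(QuotientAddGroup.quotientKerEquivOfSurjective _ hsurj).trans (auxPrecomp ι)⟩
end

section
/- Let $\mathcal{T}$ be an $R$-linear triangulated category, $M \in \mathcal{T}$, and $x \in R$ an $M$-productive element (i.e. $x$ acts as zero on $M /\!\!/ x^k$ for all relevant powers via productivity of powers). If $x$ is $(M,M)$-regular ($x$ is a non-zero divisor on $\mathrm{End}^*_{\mathcal{T}}(M)$ and $M /\!\!/ x \neq 0$), then for every $n \geq 1$ the morphism $x^{n-1}(M /\!\!/ x^n) \colon M /\!\!/ x^n \to \Sigma^{(n-1)|x|}(M /\!\!/ x^n)$ is non-zero. -/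
open CategoryTheory Category Limits Pretriangulated

universe v u

variable (T : Type u) [Category.{v} T] [Preadditive T] [HasZeroObject T]
  [HasShift T ℤ] [∀ n : ℤ, (CategoryTheory.shiftFunctor T n).Additive] [Pretriangulated T]

/-!
STATEMENT 18: Let `x` be a homogeneous central element with chosen powers `xⁿ` and
chosen Koszul objects `K n = M ⫽ xⁿ`.  Assume `x` is `M`-productive (each power `xⁿ`
acts as zero on `M ⫽ xⁿ`) and `(M,M)`-regular (`x` is a non-zero divisor on
`End^*_T(M)` and `M ⫽ x ≠ 0`).  Then for every `n ≥ 1` the morphism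
`x^{n-1}(M ⫽ xⁿ) : M ⫽ xⁿ ⟶ Σ^{(n-1)|x|}(M ⫽ xⁿ)` is non-zero.
-/

theorem stmt18 {d : ℤ} (x : CentralElement T d)
    (xpow : ∀ n : ℕ, CentralElement T ((n : ℤ) * d))
    (hx1 : ∀ M : T, (xpow 1).app M = x.app M ≫ eqToHom (by rw [Nat.cast_one, one_mul]))
    (hpow : ∀ (n : ℕ) (M : T), (xpow (n + 1)).app M =
      x.app M ≫ (xpow n).app (M⟦d⟧) ≫
        (shiftFunctorAdd' T d ((n : ℤ) * d) (((n + 1 : ℕ) : ℤ) * d)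
          (by push_cast; ring)).inv.app M)
    (M : T) (K : ℕ → T)
    (g : ∀ n : ℕ, M⟦(n : ℤ) * d⟧ ⟶ K n) (h : ∀ n : ℕ, K n ⟶ M⟦(1:ℤ)⟧)
    (ht : ∀ n : ℕ, 1 ≤ n → Triangle.mk ((xpow n).app M) (g n) (h n) ∈ distTriang T)
    (hprod : ∀ n : ℕ, 1 ≤ n → (xpow n).app (K n) = 0)
    (hreg : IsRegularOn T x M M)
    (hnz : ¬ IsZero (K 1)) :
    ∀ n : ℕ, 1 ≤ n → (xpow (n - 1)).app (K n) ≠ 0 := by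
  -- A general right-cancellation lemma for shifted central maps.
  have cancel : ∀ (e : ℤ) (y : M ⟶ M⟦e⟧),
      (∀ (j : ℤ) (f : M⟦j⟧ ⟶ M), f ≫ y = 0 → f = 0) →
      ∀ (s j : ℤ) (φ : M⟦j⟧ ⟶ M⟦s⟧), φ ≫ y⟦s⟧' = 0 → φ = 0 := by
    intro e y hy s j φ hφ
    have hjs : j - s + s = j := by ring
    obtain ⟨ψ, hψ⟩ := (shiftFunctor T s).map_surjective
      ((shiftFunctorAdd' T (j - s) s j hjs).inv.app M ≫ φ)
    have h1 : ψ ≫ y = 0 := by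
      apply (shiftFunctor T s).map_injective
      rw [Functor.map_comp, hψ, Functor.map_zero, assoc, hφ, comp_zero]
    rw [hy (j - s) ψ h1, Functor.map_zero] at hψ
    calc φ = (shiftFunctorAdd' T (j - s) s j hjs).hom.app M ≫
        ((shiftFunctorAdd' T (j - s) s j hjs).inv.app M ≫ φ) := by
          rw [← assoc, Iso.hom_inv_id_app, id_comp]
      _ = 0 := by rw [← hψ, comp_zero]
  -- Regularity of the powers of `x`.
  have regpow : ∀ (t : ℕ), 1 ≤ t → ∀ (j : ℤ) (f : M⟦j⟧ ⟶ M),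
      f ≫ (xpow t).app M = 0 → f = 0 := by
    intro t
    induction t with
    | zero => omega
    | succ t ih =>
      intro _ j f hf
      rcases Nat.eq_zero_or_pos t with rfl | ht
      · rw [hx1 M, ← assoc, comp_eqToHom_iff, zero_comp] at hf
        exact hreg j f hf
      · rw [hpow t M] at hf
        have h1 : f ≫ x.app M ≫ (xpow t).app (M⟦d⟧) = 0 := by
          have h2 := hf =≫ (shiftFunctorAdd' T d ((t : ℤ) * d) (((t + 1 : ℕ) : ℤ) * d)
            (by push_cast; ring)).hom.app M
          simpa using h2
        rw [← (xpow t).natural (x.app M), ← assoc] at h1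
        exact ih ht j f (cancel d (x.app M) hreg ((t : ℤ) * d) j _ h1)
  -- variant for morphisms `M ⟶ M`
  have regM : ∀ (t : ℕ), 1 ≤ t → ∀ (f : M ⟶ M), f ≫ (xpow t).app M = 0 → f = 0 := by
    intro t ht f hf
    have h1 : ((shiftFunctorZero T ℤ).hom.app M ≫ f) ≫ (xpow t).app M = 0 := by
      rw [assoc, hf, comp_zero]
    have h2 := regpow t ht 0 _ h1
    calc f = (shiftFunctorZero T ℤ).inv.app M ≫ ((shiftFunctorZero T ℤ).hom.app M ≫ f) := by
            rw [← assoc, Iso.inv_hom_id_app, id_comp]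
      _ = 0 := by rw [h2, comp_zero]
  intro n hn hz
  obtain ⟨k, rfl⟩ : ∃ k, n = k + 1 := ⟨n - 1, (Nat.succ_pred_eq_of_pos hn).symm⟩
  rw [Nat.add_sub_cancel] at hz
  -- notation
  set m : ℤ := (k : ℤ) * d with hm
  set nd : ℤ := ((k + 1 : ℕ) : ℤ) * d with hnd
  set X : M ⟶ M⟦nd⟧ := (xpow (k + 1)).app M with hX
  -- Step A : naturality + the vanishing assumption
  have hA : (xpow k).app (M⟦nd⟧) ≫ (g (k + 1))⟦m⟧' = 0 := by
    rw [(xpow k).natural (g (k + 1)), hz, comp_zero]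
  -- Step B : factor through the shifted triangle
  have hShift : Triangle.mk (m.negOnePow • X⟦m⟧') (m.negOnePow • (g (k + 1))⟦m⟧')
      (m.negOnePow • ((h (k + 1))⟦m⟧' ≫ (shiftFunctorComm T 1 m).hom.app M)) ∈ distTriang T :=
    Triangle.shift_distinguished _ (ht (k + 1) (Nat.le_add_left 1 k)) m
  obtain ⟨w₀, hw₀⟩ : ∃ w₀ : M⟦nd⟧ ⟶ M⟦m⟧, (xpow k).app (M⟦nd⟧) = w₀ ≫ (m.negOnePow • X⟦m⟧') :=
    Triangle.coyoneda_exact₂ _ hShift ((xpow k).app (M⟦nd⟧))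
    (by show (xpow k).app (M⟦nd⟧) ≫ (m.negOnePow • (g (k + 1))⟦m⟧') = 0
        rw [Linear.comp_units_smul, hA, smul_zero])
  set w : M⟦nd⟧ ⟶ M⟦m⟧ := m.negOnePow • w₀ with hw
  have R2 : (xpow k).app (M⟦nd⟧) = w ≫ X⟦m⟧' := by
    rw [hw, Linear.units_smul_comp, hw₀]
    rw [Linear.comp_units_smul]
  -- Step C/D : (xpow k).app M = X ≫ w
  have R3 : (xpow k).app M = X ≫ w := by
    have h0 : ((xpow k).app M - X ≫ w) ≫ X⟦m⟧' = 0 := by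
      rw [Preadditive.sub_comp, (xpow k).natural X, R2, assoc, sub_self]
    have h1 : ((shiftFunctorZero T ℤ).hom.app M ≫ ((xpow k).app M - X ≫ w)) ≫ X⟦m⟧' = 0 := by
      rw [assoc, h0, comp_zero]
    have h2 := cancel nd X (regpow (k + 1) (Nat.le_add_left 1 k)) m 0 _ h1
    have h3 : (xpow k).app M - X ≫ w = 0 := by
      calc (xpow k).app M - X ≫ w
          = (shiftFunctorZero T ℤ).inv.app M ≫
            ((shiftFunctorZero T ℤ).hom.app M ≫ ((xpow k).app M - X ≫ w)) := by
              rw [← assoc, Iso.inv_hom_id_app, id_comp]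
        _ = 0 := by rw [h2, comp_zero]
    rw [← sub_eq_zero]
    exact h3
  -- Step E : expansion of X
  set c : (M⟦d⟧)⟦m⟧ ⟶ M⟦nd⟧ := (shiftFunctorAdd' T d ((k : ℤ) * d) (((k + 1 : ℕ) : ℤ) * d)
    (by push_cast; ring)).inv.app M with hc
  set A : M⟦m⟧ ⟶ M⟦nd⟧ := (x.app M)⟦m⟧' ≫ c with hA2
  have hexp : X = (xpow k).app M ≫ A := by
    rw [hX, hpow k M, hA2, ← assoc, ← (xpow k).natural (x.app M), assoc, ← hc]
  -- Step F/G : w ≫ A = 𝟙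
  have hXA : X ≫ (𝟙 (M⟦nd⟧) - w ≫ A) = 0 := by
    rw [Preadditive.comp_sub, comp_id, ← assoc, ← R3, ← hexp, sub_self]
  obtain ⟨w1, hw1⟩ := (shiftFunctor T nd).map_surjective (𝟙 (M⟦nd⟧) - w ≫ A)
  have hw1' : w1 ≫ X = 0 := by
    rw [← (xpow (k + 1)).natural w1, hw1]
    exact hXA
  have hw10 : w1 = 0 := regM (k + 1) (Nat.le_add_left 1 k) w1 hw1'
  have hwA : w ≫ A = 𝟙 (M⟦nd⟧) := by
    rw [hw10, Functor.map_zero] at hw1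
    exact (sub_eq_zero.1 hw1.symm).symm
  -- Step H : A ≫ w = 𝟙
  have hAw : A ≫ w = 𝟙 (M⟦m⟧) := by
    have h0 : (A ≫ w - 𝟙 (M⟦m⟧)) ≫ A = 0 := by
      rw [Preadditive.sub_comp, id_comp, assoc, hwA, comp_id, sub_self]
    have h1 : (A ≫ w - 𝟙 (M⟦m⟧)) ≫ (x.app M)⟦m⟧' = 0 := by
      have h2 := h0 =≫ (shiftFunctorAdd' T d ((k : ℤ) * d) (((k + 1 : ℕ) : ℤ) * d)
        (by push_cast; ring)).hom.app M
      have h4 : A ≫ (shiftFunctorAdd' T d ((k : ℤ) * d) (((k + 1 : ℕ) : ℤ) * d)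
          (by push_cast; ring)).hom.app M = (x.app M)⟦m⟧' := by
        rw [hA2, assoc, hc, Iso.inv_hom_id_app]
        exact comp_id _
      rw [assoc, h4, zero_comp] at h2
      exact h2
    have h3 := cancel d (x.app M) hreg m m _ h1
    rw [← sub_eq_zero]
    exact h3
  -- Step I : x.app M is an isomorphism
  have hiso : IsIso A := ⟨w, hAw, hwA⟩
  have hisoc : IsIso c := by rw [hc]; infer_instance
  have hisoxm : IsIso ((x.app M)⟦m⟧') := by
    have : (x.app M)⟦m⟧' = A ≫ inv c := by rw [hA2, assoc, IsIso.hom_inv_id, comp_id]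
    rw [this]
    infer_instance
  have hisox : IsIso (x.app M) := by
    have := isIso_of_reflects_iso (x.app M) (shiftFunctor T m)
    exact this
  -- Step J : conclusion
  refine hnz (Triangle.isZero₃_of_isIso₁ _ (ht 1 le_rfl) ?_)
  dsimp
  rw [hx1 M]
  show IsIso (x.app M ≫ _)
  exact IsIso.comp_isIso' hisox (Iso.isIso_hom (eqToIso
    (by rw [Nat.cast_one, one_mul] : M⟦d⟧ = M⟦((1 : ℕ) : ℤ) * d⟧)))
end

section
/- Let $\mathcal{T}$ be an $R$-linear triangulated category, $C, M \in \mathcal{T}$, and $x \in R$ homogeneous. Then the canonical morphism $\Sigma^{-1}(M /\!\!/ x) \to M$ is $C$-ghost if and only if the canonical morphism $\Sigma^{|x|} C \to C /\!\!/ x$ is $M$-coghost (induces zero on $\mathrm{Hom}^*_{\mathcal{T}}(-, M)$). -/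
open CategoryTheory Category Limits Pretriangulated

universe v u

variable (T : Type u) [Category.{v} T] [Preadditive T] [HasZeroObject T]
  [HasShift T ℤ] [∀ n : ℤ, (CategoryTheory.shiftFunctor T n).Additive] [Pretriangulated T]

namespace Stmt19Aux

variable {T}

set_option linter.unusedSectionVars false

/-- Conjugation of a central element along an isomorphism. -/
lemma conj {d : ℤ} (x : CentralElement T d) {A B : T} (i : A ≅ B) :
    x.app A = i.hom ≫ x.app B ≫ (i.inv)⟦d⟧' := by
  have h := x.natural i.hom
  have h2 : (i.hom)⟦d⟧' ≫ (i.inv)⟦d⟧' = 𝟙 _ := by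
    rw [← CategoryTheory.Functor.map_comp, Iso.hom_inv_id, CategoryTheory.Functor.map_id]
  calc x.app A = x.app A ≫ (i.hom)⟦d⟧' ≫ (i.inv)⟦d⟧' := by rw [h2, comp_id]
    _ = i.hom ≫ x.app B ≫ (i.inv)⟦d⟧' := by rw [← assoc, h, assoc]

lemma step_up {d : ℤ} (x : CentralElement T d) (m : ℤ) (A : T)
    (h : ∃ e : (A⟦d⟧)⟦m⟧ ≅ (A⟦m⟧)⟦d⟧, x.app (A⟦m⟧) = (x.app A)⟦m⟧' ≫ e.hom) :
    ∃ e : (A⟦d⟧)⟦m+1⟧ ≅ (A⟦m+1⟧)⟦d⟧, x.app (A⟦m+1⟧) = (x.app A)⟦m+1⟧' ≫ e.hom := by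
  obtain ⟨e, hx⟩ := h
  set a := (shiftFunctorAdd' T m 1 (m+1) rfl).app A with ha
  set a₂ := (shiftFunctorAdd' T m 1 (m+1) rfl).app (A⟦d⟧) with ha₂
  have h1 : x.app (A⟦m+1⟧) = a.hom ≫ x.app ((A⟦m⟧)⟦(1:ℤ)⟧) ≫ (a.inv)⟦d⟧' := conj x a
  rw [x.shift_comm (A⟦m⟧), hx] at h1
  have nat : (x.app A)⟦m+1⟧' ≫ a₂.hom = a.hom ≫ ((x.app A)⟦m⟧')⟦1⟧' :=
    (shiftFunctorAdd' T m 1 (m+1) rfl).hom.naturality (x.app A)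
  refine ⟨((-1 : ℤˣ) ^ d) • (a₂ ≪≫ (shiftFunctor T (1:ℤ)).mapIso e ≪≫
    shiftComm (A⟦m⟧) d 1 ≪≫ (shiftFunctor T d).mapIso a.symm), ?_⟩
  rw [h1]
  simp only [Preadditive.smul_iso_hom, Iso.trans_hom, Functor.mapIso_hom, Iso.symm_hom,
    Units.smul_def, Preadditive.comp_zsmul, Preadditive.zsmul_comp,
    CategoryTheory.Functor.map_comp, assoc]
  congr 1
  rw [reassoc_of% nat]

lemma step_down {d : ℤ} (x : CentralElement T d) (m : ℤ) (A : T)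
    (h : ∃ e : (A⟦d⟧)⟦m⟧ ≅ (A⟦m⟧)⟦d⟧, x.app (A⟦m⟧) = (x.app A)⟦m⟧' ≫ e.hom) :
    ∃ e : (A⟦d⟧)⟦m-1⟧ ≅ (A⟦m-1⟧)⟦d⟧, x.app (A⟦m-1⟧) = (x.app A)⟦m-1⟧' ≫ e.hom := by
  obtain ⟨e, hx⟩ := h
  set b := (shiftFunctorAdd' T (m-1) 1 m (by ring)).app A with hb
  set b₂ := (shiftFunctorAdd' T (m-1) 1 m (by ring)).app (A⟦d⟧) with hb₂
  have h1 : x.app ((A⟦m-1⟧)⟦(1:ℤ)⟧) = b.inv ≫ x.app (A⟦m⟧) ≫ (b.hom)⟦d⟧' := conj x b.symm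
  rw [x.shift_comm (A⟦m-1⟧), hx] at h1
  have nat : ((x.app A)⟦m-1⟧')⟦1⟧' ≫ b₂.inv = b.inv ≫ (x.app A)⟦m⟧' :=
    (shiftFunctorAdd' T (m-1) 1 m (by ring)).inv.naturality (x.app A)
  set L : ((A⟦d⟧)⟦m-1⟧)⟦(1:ℤ)⟧ ≅ ((A⟦m-1⟧)⟦d⟧)⟦(1:ℤ)⟧ :=
    (((-1 : ℤˣ) ^ d)⁻¹) • (b₂.symm ≪≫ e ≪≫ (shiftFunctor T d).mapIso b ≪≫
      (shiftComm (A⟦m-1⟧) d 1).symm) with hL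
  have h4 : (x.app (A⟦m-1⟧))⟦(1:ℤ)⟧' = ((x.app A)⟦m-1⟧')⟦1⟧' ≫ L.hom := by
    have h2 := congrArg (fun t => ((((-1 : ℤˣ) ^ d)⁻¹ : ℤˣ) : ℤ) •
      (t ≫ (shiftComm (A⟦m-1⟧) d 1).inv)) h1
    simp only [Preadditive.zsmul_comp, Preadditive.comp_zsmul, smul_smul, assoc,
      Iso.hom_inv_id, comp_id, ← Units.val_mul, inv_mul_cancel, Units.val_one, one_smul] at h2
    rw [h2, hL]
    simp only [Preadditive.smul_iso_hom, Iso.trans_hom, Iso.symm_hom, Functor.mapIso_hom,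
      Units.smul_def, Preadditive.comp_zsmul, assoc]
    congr 1
    rw [reassoc_of% nat]
  refine ⟨(shiftFunctor T (1:ℤ)).preimageIso L, ?_⟩
  apply (shiftFunctor T (1:ℤ)).map_injective
  rw [CategoryTheory.Functor.map_comp, Functor.preimageIso_hom, Functor.map_preimage]
  exact h4

/-- Key lemma: a central element commutes with all shifts up to isomorphism. -/
lemma key {d : ℤ} (x : CentralElement T d) (n : ℤ) (A : T) :
    ∃ e : (A⟦d⟧)⟦n⟧ ≅ (A⟦n⟧)⟦d⟧, x.app (A⟦n⟧) = (x.app A)⟦n⟧' ≫ e.hom := by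
  induction n using Int.induction_on generalizing A with
  | zero =>
      refine ⟨((shiftFunctorZero T ℤ).app (A⟦d⟧)) ≪≫
        ((shiftFunctor T d).mapIso ((shiftFunctorZero T ℤ).app A).symm), ?_⟩
      have h := conj x ((shiftFunctorZero T ℤ).app A)
      have hnat := (shiftFunctorZero T ℤ).hom.naturality (x.app A)
      dsimp at hnat
      rw [h]
      dsimp
      rw [← assoc, ← hnat, assoc]
  | succ m ih => exact step_up x m A (ih A)
  | pred m ih => exact step_down x (-m) A (ih A)

end Stmt19Aux

open Stmt19Aux in
theorem stmt19 {d : ℤ} (x : CentralElement T d) (C M : T)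
    (KC KM : T)
    (gC : C⟦d⟧ ⟶ KC) (hC : KC ⟶ C⟦(1:ℤ)⟧)
    (htC : Triangle.mk (x.app C) gC hC ∈ distTriang T)
    (gM : M⟦d⟧ ⟶ KM) (hM : KM ⟶ M⟦(1:ℤ)⟧)
    (htM : Triangle.mk (x.app M) gM hM ∈ distTriang T) :
    IsGhost T C hM ↔ IsCoghost T M gC := by
  have hGhost : IsGhost T C hM ↔ IsRegularOn T x C M := by
    constructor
    · intro hg n f hf
      set v := (shiftFunctorAdd' T n 1 (n+1) rfl).app C with hv
      have hzero : (v.hom ≫ f⟦(1:ℤ)⟧') ≫ (x.app M)⟦(1:ℤ)⟧' = 0 := by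
        rw [assoc, ← CategoryTheory.Functor.map_comp, hf, Functor.map_zero, comp_zero]
      obtain ⟨g, hg'⟩ := Triangle.coyoneda_exact₁ _ htM (v.hom ≫ f⟦(1:ℤ)⟧') hzero
      have : v.hom ≫ f⟦(1:ℤ)⟧' = 0 := by exact hg'.trans (hg (n+1) g)
      have hf1 : f⟦(1:ℤ)⟧' = 0 := by
        rwa [Preadditive.IsIso.comp_left_eq_zero] at this
      apply (shiftFunctor T (1:ℤ)).map_injective
      rw [hf1, Functor.map_zero]
    · intro hreg n g
      have h31 : hM ≫ (x.app M)⟦(1:ℤ)⟧' = 0 := comp_distTriang_mor_zero₃₁ _ htM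
      set w := (shiftFunctorAdd' T (n-1) 1 n (by ring)).app C with hw
      set F : (C⟦(n-1:ℤ)⟧)⟦(1:ℤ)⟧ ⟶ M⟦(1:ℤ)⟧ := w.inv ≫ g ≫ hM with hF
      set u := (shiftFunctor T (1:ℤ)).preimage F with hu
      have hmapu : u⟦(1:ℤ)⟧' = F := Functor.map_preimage _ F
      have hux : u ≫ x.app M = 0 := by
        apply (shiftFunctor T (1:ℤ)).map_injective
        rw [CategoryTheory.Functor.map_comp, hmapu, Functor.map_zero, hF, assoc, assoc, h31,
          comp_zero, comp_zero]
      have hu0 : u = 0 := hreg (n-1) u hux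
      have hF0 : F = 0 := by rw [← hmapu, hu0, Functor.map_zero]
      have : w.inv ≫ g ≫ hM = 0 := hF0
      rwa [Preadditive.IsIso.comp_left_eq_zero] at this
  have hCoghost : IsCoghost T M gC ↔ IsRegularOn T x C M := by
    have hB' : IsCoghost T M gC ↔
        (∀ (m : ℤ) (f : C⟦d⟧ ⟶ M⟦m⟧), x.app C ≫ f = 0 → f = 0) := by
      constructor
      · intro hc m f hf
        obtain ⟨g, hg⟩ := Triangle.yoneda_exact₂ _ htC f hf
        rw [hg]; exact hc m g
      · intro hb n g
        have h12 : x.app C ≫ gC = 0 := comp_distTriang_mor_zero₁₂ _ htC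
        exact hb n (gC ≫ g) (by rw [← assoc, h12, zero_comp])
    rw [hB']
    constructor
    · -- B' → Regular
      intro hb n f hf
      obtain ⟨e, hx⟩ := key x n C
      have hnat : x.app (C⟦n⟧) ≫ f⟦d⟧' = 0 := by rw [x.natural f, hf]
      have h0 : (x.app C)⟦n⟧' ≫ e.hom ≫ f⟦d⟧' = 0 := by
        rw [← assoc, ← hx, hnat]
      set η := (shiftFunctorCompIsoId T n (-n) (by ring)).symm with hη
      set htil := η.hom.app (C⟦d⟧) ≫ (e.hom ≫ f⟦d⟧')⟦-n⟧' with hhtil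
      have hnatη : x.app C ≫ η.hom.app (C⟦d⟧) = η.hom.app C ≫ ((x.app C)⟦n⟧')⟦-n⟧' :=
        η.hom.naturality (x.app C)
      have hkill : x.app C ≫ htil = 0 := by
        rw [hhtil, ← assoc, hnatη, assoc, ← CategoryTheory.Functor.map_comp, h0,
          Functor.map_zero, comp_zero]
      set r := (shiftFunctorAdd' T d (-n) (d-n) (by ring)).app M with hr
      have : htil ≫ r.inv = 0 := by
        apply hb (d-n) (htil ≫ r.inv)
        rw [← assoc, hkill, zero_comp]
      have htil0 : htil = 0 := by rwa [Preadditive.IsIso.comp_right_eq_zero] at this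
      have hsh : (e.hom ≫ f⟦d⟧')⟦-n⟧' = 0 := by
        have := htil0
        rw [hhtil, Preadditive.IsIso.comp_left_eq_zero] at this
        exact this
      have hef : e.hom ≫ f⟦d⟧' = 0 := by
        apply (shiftFunctor T (-n)).map_injective
        rw [hsh, Functor.map_zero]
      have hfd : f⟦d⟧' = 0 := by rwa [Preadditive.IsIso.comp_left_eq_zero] at hef
      apply (shiftFunctor T d).map_injective
      rw [hfd, Functor.map_zero]
    · -- Regular → B'
      intro hreg m f hf
      set p := (shiftFunctorAdd' T (m-d) d m (by ring)).app M with hp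
      set v := (shiftFunctor T d).preimage (f ≫ p.hom) with hv
      have hmapv : v⟦d⟧' = f ≫ p.hom := Functor.map_preimage _ _
      have h0 : v ≫ x.app (M⟦m-d⟧) = 0 := by
        rw [← x.natural v, hmapv, ← assoc, hf, zero_comp]
      obtain ⟨e, hx⟩ := key x (m-d) M
      have h1 : v ≫ (x.app M)⟦m-d⟧' = 0 := by
        have : (v ≫ (x.app M)⟦m-d⟧') ≫ e.hom = 0 := by rw [assoc, ← hx, h0]
        rwa [Preadditive.IsIso.comp_right_eq_zero] at this
      set ε := shiftFunctorCompIsoId T (m-d) (d-m) (by ring) with hε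
      set vtil := v⟦d-m⟧' ≫ ε.hom.app M with hvtil
      have hnatε : ((x.app M)⟦m-d⟧')⟦d-m⟧' ≫ ε.hom.app (M⟦d⟧) = ε.hom.app M ≫ x.app M :=
        ε.hom.naturality (x.app M)
      have hkill : vtil ≫ x.app M = 0 := by
        rw [hvtil, assoc, ← hnatε, ← assoc, ← CategoryTheory.Functor.map_comp, h1,
          Functor.map_zero, zero_comp]
      have hvtil0 : vtil = 0 := hreg (d-m) vtil hkill
      have hv0 : v = 0 := by
        apply (shiftFunctor T (d-m)).map_injective
        rw [Functor.map_zero]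
        have := hvtil0
        rw [hvtil, Preadditive.IsIso.comp_right_eq_zero] at this
        exact this
      have : f ≫ p.hom = 0 := by rw [← hmapv, hv0, Functor.map_zero]
      rwa [Preadditive.IsIso.comp_right_eq_zero] at this
  rw [hGhost, hCoghost]
end
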